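/- arXiv:0708.4059 — 8 statements merged into one kernel-verified Lean document; each statement's English description precedes it below -/
import Mathlib

section
/- If F is a subexponential distribution function on (0,∞) (i.e., the tail of the n-fold convolution satisfies lim_{x→∞} (1-F^{*n}(x))/(1-F(x)) = n for all n ≥ 2), then for i.i.d. random variables X₁,…,Xₙ with distribution F, lim_{x→∞} P[X₁+⋯+Xₙ > x] / P[max(X₁,…,Xₙ) > x] = 1. -/
set_option linter.unnecessarySimpa false


open MeasureTheory ProbabilityTheory Filter Set Asymptotics
open scoped Classical

/-- Tail of a distribution (measure) on `ℝ`: `F̄(x) = μ(x,∞)`. -/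
noncomputable def tailP (μ : Measure ℝ) (x : ℝ) : ℝ := (μ (Set.Ioi x)).toReal

/-- Tail of the `n`-fold convolution: `P[X₁+⋯+Xₙ > x]` for i.i.d. `Xᵢ ∼ μ`. -/
noncomputable def convTail (μ : Measure ℝ) (n : ℕ) (x : ℝ) : ℝ :=
  ((Measure.pi fun _ : Fin n => μ) {y | x < ∑ i, y i}).toReal

/-- A probability distribution on `(0,∞)` is subexponential if
`(1-F^{*n}(x))/(1-F(x)) → n` for all `n ≥ 2`. -/
def Subexponential (μ : Measure ℝ) : Prop :=
  IsProbabilityMeasure μ ∧ μ (Set.Ioi 0) = 1 ∧ (∀ x : ℝ, 0 < tailP μ x) ∧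
    ∀ n : ℕ, 2 ≤ n →
      Tendsto (fun x => convTail μ n x / tailP μ x) atTop (nhds (n : ℝ))

lemma map_joint_eq_pi {Ω : Type} [MeasurableSpace Ω] (P : Measure Ω) [IsProbabilityMeasure P]
    (μ : Measure ℝ) [IsProbabilityMeasure μ] (n : ℕ) (X : Fin n → Ω → ℝ)
    (hmeas : ∀ i, Measurable (X i))
    (hindep : iIndepFun X P)
    (hlaw : ∀ i, Measure.map (X i) P = μ) :
    Measure.map (fun ω i => X i ω) P = Measure.pi (fun _ : Fin n => μ) := by
  refine (Measure.pi_eq (μ := fun _ : Fin n => μ) fun s hs => ?_).symm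
  rw [Measure.map_apply (measurable_pi_lambda _ fun i => hmeas i) (MeasurableSet.univ_pi hs)]
  have hpre : (fun ω i => X i ω) ⁻¹' (Set.univ.pi s) = ⋂ i, X i ⁻¹' s i := by
    ext ω; simp [Set.mem_pi]
  rw [hpre, hindep.meas_iInter (fun i => ⟨s i, hs i, rfl⟩)]
  exact Finset.prod_congr rfl fun i _ => by
    rw [← hlaw i, Measure.map_apply (hmeas i) (hs i)]

/-- For i.i.d. `X₁,…,Xₙ` with subexponential distribution `F`,
`P[X₁+⋯+Xₙ > x] / P[max(X₁,…,Xₙ) > x] → 1` as `x → ∞`. -/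
theorem subexponential_sum_asymp_max
    {Ω : Type} [MeasurableSpace Ω] (P : Measure Ω) [IsProbabilityMeasure P]
    (μ : Measure ℝ) (hμ : Subexponential μ)
    (n : ℕ) (hn : 1 ≤ n) (X : Fin n → Ω → ℝ)
    (hmeas : ∀ i, Measurable (X i))
    (hindep : iIndepFun X P)
    (hlaw : ∀ i, Measure.map (X i) P = μ) :
    Tendsto (fun x =>
        (P {ω | x < ∑ i, X i ω}).toReal / (P {ω | ∃ i, x < X i ω}).toReal)
      atTop (nhds 1) := by
  obtain ⟨hprob, _hpos0, htail, hconv⟩ := hμ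
  haveI := hprob
  set t : ℝ → ℝ := tailP μ with ht_def
  have hmapeq := map_joint_eq_pi P μ n X hmeas hindep hlaw
  -- t x ∈ (0, 1]
  have ht_le : ∀ x, t x ≤ 1 := by
    intro x
    have h1 : μ (Set.Ioi x) ≤ 1 := prob_le_one
    simpa [ht_def, tailP] using ENNReal.toReal_le_of_le_ofReal one_pos.le (by simpa using h1)
  -- P[sum > x] = convTail
  have hsum : ∀ x, (P {ω | x < ∑ i, X i ω}).toReal = convTail μ n x := by
    intro x
    have hmS : MeasurableSet {y : Fin n → ℝ | x < ∑ i, y i} :=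
      measurableSet_lt measurable_const (Finset.measurable_sum _ fun i _ => measurable_pi_apply i)
    unfold convTail
    rw [← hmapeq, Measure.map_apply (measurable_pi_lambda _ fun i => hmeas i) hmS]
    rfl
  -- P[Iic x] real value
  have hIic : ∀ x, (μ (Set.Iic x)).toReal = 1 - t x := by
    intro x
    have hadd : μ (Set.Iic x) + μ (Set.Iic x)ᶜ = 1 := (measure_add_measure_compl measurableSet_Iic).trans measure_univ
    rw [Set.compl_Iic] at hadd
    have := congrArg ENNReal.toReal hadd
    rw [ENNReal.toReal_add (measure_ne_top μ _) (measure_ne_top μ _)] at this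
    simp only [ENNReal.toReal_one] at this
    simp only [ht_def, tailP]
    linarith
  -- P[max > x] = 1 - (1 - t x)^n
  have hmax : ∀ x, (P {ω | ∃ i, x < X i ω}).toReal = 1 - (1 - t x) ^ n := by
    intro x
    have hA : MeasurableSet {ω | ∃ i, x < X i ω} := by
      have : {ω | ∃ i, x < X i ω} = ⋃ i, X i ⁻¹' Set.Ioi x := by ext ω; simp
      rw [this]; exact MeasurableSet.iUnion fun i => (hmeas i) measurableSet_Ioi
    have hcompl : {ω | ∃ i, x < X i ω}ᶜ = ⋂ i, X i ⁻¹' Set.Iic x := by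
      ext ω; simp [not_lt]
    have hPc : P {ω | ∃ i, x < X i ω}ᶜ = μ (Set.Iic x) ^ n := by
      rw [hcompl, hindep.meas_iInter (fun i => ⟨Set.Iic x, measurableSet_Iic, rfl⟩)]
      have : ∀ i : Fin n, P (X i ⁻¹' Set.Iic x) = μ (Set.Iic x) := fun i => by
        rw [← hlaw i, Measure.map_apply (hmeas i) measurableSet_Iic]
      simp [this]
    have hadd : P {ω | ∃ i, x < X i ω} + P {ω | ∃ i, x < X i ω}ᶜ = 1 :=
      (measure_add_measure_compl hA).trans measure_univ
    have := congrArg ENNReal.toReal hadd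
    rw [ENNReal.toReal_add (measure_ne_top P _) (measure_ne_top P _)] at this
    simp only [ENNReal.toReal_one, hPc, ENNReal.toReal_pow, hIic x] at this
    linarith
  -- t → 0
  have ht0 : Tendsto t atTop (nhds 0) := by
    have h1 : Tendsto (fun x => μ (Set.Ioi x)) atTop (nhds (μ (⋂ x : ℝ, Set.Ioi x))) :=
      tendsto_measure_iInter_atTop (fun x => measurableSet_Ioi.nullMeasurableSet)
        (fun a b hab => Set.Ioi_subset_Ioi hab) ⟨0, measure_ne_top μ _⟩
    have hempty : (⋂ x : ℝ, Set.Ioi x) = ∅ := by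
      ext y; simp only [Set.mem_iInter, Set.mem_Ioi, Set.mem_empty_iff_false, iff_false, not_forall,
        not_lt]
      exact ⟨y, le_refl y⟩
    rw [hempty, measure_empty] at h1
    have := (ENNReal.tendsto_toReal (by simp)).comp h1
    exact this
  -- S x := ∑_{k<n} (1 - t x)^k → n
  have hS : Tendsto (fun x => ∑ k ∈ Finset.range n, (1 - t x) ^ k) atTop (nhds n) := by
    have hc : Continuous (fun u : ℝ => ∑ k ∈ Finset.range n, (1 - u) ^ k) := by
      continuity
    have := (hc.tendsto 0).comp ht0
    simpa [Function.comp_def] using this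
  -- convTail / t → n
  have hconvn : Tendsto (fun x => convTail μ n x / t x) atTop (nhds n) := by
    rcases eq_or_lt_of_le hn with h1 | h2
    · have hconv1 : ∀ x, convTail μ n x = t x := by
        intro x
        rw [← hsum x]
        subst h1
        have : {ω | x < ∑ i : Fin 1, X i ω} = X 0 ⁻¹' Set.Ioi x := by
          ext ω; simp [Fin.sum_univ_one]
        rw [this, ← Measure.map_apply (hmeas 0) measurableSet_Ioi, hlaw 0]
        rfl
      have : (fun x => convTail μ n x / t x) = fun x => 1 := by
        funext x; rw [hconv1 x, div_self (ne_of_gt (htail x))]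
      rw [this]
      subst h1
      simpa using (tendsto_const_nhds : Tendsto (fun _ : ℝ => (1:ℝ)) atTop (nhds 1))
    · exact hconv n h2
  -- rewrite the quotient
  have key : ∀ x, (P {ω | x < ∑ i, X i ω}).toReal / (P {ω | ∃ i, x < X i ω}).toReal
      = (convTail μ n x / t x) / (∑ k ∈ Finset.range n, (1 - t x) ^ k) := by
    intro x
    have htx : 0 < t x := htail x
    have hSx : (1 : ℝ) ≤ ∑ k ∈ Finset.range n, (1 - t x) ^ k := by
      have h0 : ∀ k ∈ Finset.range n, (0 : ℝ) ≤ (1 - t x) ^ k := fun k _ =>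
        pow_nonneg (by linarith [ht_le x]) k
      calc (1 : ℝ) = (1 - t x) ^ 0 := by simp
        _ ≤ ∑ k ∈ Finset.range n, (1 - t x) ^ k :=
          Finset.single_le_sum h0 (Finset.mem_range.mpr (by omega))
    have hgeom : 1 - (1 - t x) ^ n = t x * ∑ k ∈ Finset.range n, (1 - t x) ^ k := by
      have := geom_sum_mul (1 - t x) n
      nlinarith [this]
    rw [hsum x, hmax x, hgeom]
    field_simp
  simp only [key]
  have hne : (n : ℝ) ≠ 0 := Nat.cast_ne_zero.mpr (by omega)
  have := hconvn.div hS hne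
  simpa [div_self hne, Pi.div_def] using this
end

section
/- If X₁,…,Xₙ are i.i.d. random variables with a subexponential distribution F, then P[X₁+⋯+Xₙ > x, and Xᵢ ≤ x for every 1 ≤ i ≤ n] = o(1-F(x)) as x → ∞. -/
open MeasureTheory ProbabilityTheory Filter Set Asymptotics
open scoped Classical

/-- For i.i.d. `X₁,…,Xₙ` with subexponential distribution `F`,
`P[X₁+⋯+Xₙ > x, Xᵢ ≤ x for all i] = o(1-F(x))` as `x → ∞`. -/
theorem subexponential_truncated_sum_littleO
    {Ω : Type} [MeasurableSpace Ω] (P : Measure Ω) [IsProbabilityMeasure P]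
    (μ : Measure ℝ) (hμ : Subexponential μ)
    (n : ℕ) (hn : 1 ≤ n) (X : Fin n → Ω → ℝ)
    (hmeas : ∀ i, Measurable (X i))
    (hindep : iIndepFun X P)
    (hlaw : ∀ i, Measure.map (X i) P = μ) :
    (fun x => (P {ω | x < ∑ i, X i ω ∧ ∀ i, X i ω ≤ x}).toReal)
      =o[atTop] fun x => tailP μ x := by
  classical
  obtain ⟨hprob, hpos1, htpos, hlim⟩ := hμ
  haveI := hprob
  set Y : Ω → (Fin n → ℝ) := fun ω i => X i ω with hYdef
  have hYmeas : Measurable Y := measurable_pi_lambda _ hmeas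
  have hmapX : ∀ (i) (s : Set ℝ), MeasurableSet s → P (X i ⁻¹' s) = μ s := by
    intro i s hs
    rw [← hlaw i, Measure.map_apply (hmeas i) hs]
  have hmap : Measure.map Y P = Measure.pi fun _ : Fin n => μ := by
    symm
    apply Measure.pi_eq
    intro s hs
    rw [Measure.map_apply hYmeas (MeasurableSet.univ_pi hs)]
    have hset : Y ⁻¹' Set.pi Set.univ s = ⋂ i ∈ Finset.univ, X i ⁻¹' s i := by
      ext ω
      simp [Set.mem_pi, hYdef]
    rw [hset, hindep.measure_inter_preimage_eq_mul Finset.univ (fun i _ => hs i)]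
    exact Finset.prod_congr rfl fun i _ => hmapX i (s i) (hs i)
  -- sum is measurable
  have hsum : Measurable fun ω => ∑ i, X i ω := by
    apply Finset.measurable_sum
    exact fun i _ => hmeas i
  set A : ℝ → Set Ω := fun x => {ω | x < ∑ i, X i ω} with hAdef
  set B : ℝ → Set Ω := fun x => {ω | ∃ i, x < X i ω} with hBdef
  have hAm : ∀ x, MeasurableSet (A x) := fun x => measurableSet_lt measurable_const hsum
  have hBm : ∀ x, MeasurableSet (B x) := by
    intro x
    have : B x = ⋃ i, X i ⁻¹' Set.Ioi x := by ext ω; simp [hBdef]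
    rw [this]
    exact MeasurableSet.iUnion fun i => (hmeas i) measurableSet_Ioi
  -- P(A x) = convTail
  have hPA : ∀ x, (P (A x)).toReal = convTail μ n x := by
    intro x
    have hms : MeasurableSet {y : Fin n → ℝ | x < ∑ i, y i} :=
      measurableSet_lt measurable_const (Finset.measurable_sum _ fun i _ => measurable_pi_apply i)
    rw [convTail, ← hmap, Measure.map_apply hYmeas hms]
    rfl
  -- P(Bᶜ) = μ(Iic x)^n
  have hPBc : ∀ x, P (B x)ᶜ = μ (Set.Iic x) ^ n := by
    intro x
    have hset : (B x)ᶜ = Y ⁻¹' Set.pi Set.univ (fun _ : Fin n => Set.Iic x) := by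
      ext ω
      simp [hBdef, hYdef, Set.mem_pi, not_exists, not_lt, Pi.le_def]
    rw [hset, ← Measure.map_apply hYmeas (MeasurableSet.univ_pi fun _ => measurableSet_Iic), hmap,
      Measure.pi_pi]
    simp
  -- a.s. positivity
  have hnull : P {ω | ∃ i, X i ω ≤ 0} = 0 := by
    have hsub : {ω | ∃ i, X i ω ≤ 0} = ⋃ i, X i ⁻¹' Set.Iic 0 := by
      ext ω; simp
    rw [hsub]
    refine measure_iUnion_null fun i => ?_
    rw [hmapX i _ measurableSet_Iic]
    have : μ (Set.Iic 0) = 1 - μ (Set.Ioi 0) := by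
      rw [← Set.compl_Ioi, prob_compl_eq_one_sub measurableSet_Ioi]
    rw [this, hpos1, tsub_self]
  -- B \ A is null
  have hBA : ∀ x, P (B x \ A x) = 0 := by
    intro x
    refine measure_mono_null (fun ω hω => ?_) hnull
    simp only [hBdef, hAdef, Set.mem_diff, Set.mem_setOf_eq] at hω
    obtain ⟨⟨i, hi⟩, hA⟩ := hω
    by_contra h
    simp only [Set.mem_setOf_eq, not_exists, not_le] at h
    apply hA
    have hle : X i ω ≤ ∑ j, X j ω :=
      Finset.single_le_sum (fun j _ => (h j).le) (Finset.mem_univ i)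
    exact lt_of_lt_of_le hi hle
  -- tail facts
  have hIic : ∀ x, (μ (Set.Iic x)).toReal = 1 - tailP μ x := by
    intro x
    have h1 : μ (Set.Iic x) + μ (Set.Ioi x) = 1 := by
      have := prob_add_prob_compl (μ := μ) (measurableSet_Iic (a := x))
      rwa [Set.compl_Iic] at this
    have h2 : (μ (Set.Iic x)).toReal + tailP μ x = 1 := by
      rw [tailP, ← ENNReal.toReal_add (measure_ne_top _ _) (measure_ne_top _ _), h1,
        ENNReal.toReal_one]
    linarith
  -- main identity
  have hmain : ∀ x, (P {ω | x < ∑ i, X i ω ∧ ∀ i, X i ω ≤ x}).toReal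
      = convTail μ n x - (1 - (1 - tailP μ x) ^ n) := by
    intro x
    have hSdef : {ω | x < ∑ i, X i ω ∧ ∀ i, X i ω ≤ x} = A x \ B x := by
      ext ω
      simp only [hAdef, hBdef, Set.mem_diff, Set.mem_setOf_eq, not_exists, not_lt]
    have hPBA : P (B x ∩ A x) + P (B x \ A x) = P (B x) := measure_inter_add_diff _ (hAm x)
    have hBAeq : P (B x ∩ A x) = P (B x) := by rw [← hPBA, hBA x, add_zero]
    have hPAB : P (A x ∩ B x) + P (A x \ B x) = P (A x) := measure_inter_add_diff _ (hBm x)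
    have hPAeq : P (B x) + P (A x \ B x) = P (A x) := by
      rw [← hBAeq, Set.inter_comm]
      exact hPAB
    have htr : (P (B x)).toReal + (P (A x \ B x)).toReal = (P (A x)).toReal := by
      rw [← ENNReal.toReal_add (measure_ne_top _ _) (measure_ne_top _ _), hPAeq]
    have hPBval : (P (B x)).toReal = 1 - (1 - tailP μ x) ^ n := by
      have hcompl : P (B x) + P (B x)ᶜ = 1 := prob_add_prob_compl (hBm x)
      have : (P (B x)).toReal + (P (B x)ᶜ).toReal = 1 := by
        rw [← ENNReal.toReal_add (measure_ne_top _ _) (measure_ne_top _ _), hcompl,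
          ENNReal.toReal_one]
      have hc : (P (B x)ᶜ).toReal = (1 - tailP μ x) ^ n := by
        rw [hPBc x, ENNReal.toReal_pow, hIic x]
      linarith
    rw [hSdef, ← hPA x, ← htr, hPBval]
    ring
  -- limits
  have httend : Tendsto (fun x => tailP μ x) atTop (nhds 0) := by
    have h1 : Tendsto (fun x => μ (Set.Iic x)) atTop (nhds (μ Set.univ)) :=
      tendsto_measure_Iic_atTop μ
    have h2 : Tendsto (fun x => (μ (Set.Iic x)).toReal) atTop (nhds 1) := by
      have := (ENNReal.tendsto_toReal (a := μ Set.univ) (measure_ne_top _ _)).comp h1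
      simpa [measure_univ, Function.comp_def] using this
    have h3 : Tendsto (fun x => 1 - (μ (Set.Iic x)).toReal) atTop (nhds (1 - 1)) :=
      tendsto_const_nhds.sub h2
    have h4 : (fun x => 1 - (μ (Set.Iic x)).toReal) = fun x => tailP μ x := by
      funext x; rw [hIic x]; ring
    rw [h4] at h3
    simpa using h3
  have h1 : Tendsto (fun x => convTail μ n x / tailP μ x) atTop (nhds (n : ℝ)) := by
    rcases eq_or_lt_of_le hn with h | h
    · subst h
      have : ∀ x, convTail μ 1 x = tailP μ x := by
        intro x
        rw [← hPA x, tailP]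
        congr 1
        have : A x = X 0 ⁻¹' Set.Ioi x := by
          ext ω
          simp [hAdef, Fin.sum_univ_one]
        rw [this, hmapX 0 _ measurableSet_Ioi]
      have heq : (fun x => convTail μ 1 x / tailP μ x) = fun x => 1 := by
        funext x
        rw [this x, div_self (htpos x).ne']
      rw [heq]
      simp only [Nat.cast_one]
      exact tendsto_const_nhds
    · exact hlim n h
  have h2 : Tendsto (fun x => ∑ k ∈ Finset.range n, (1 - tailP μ x) ^ k) atTop (nhds (n : ℝ)) := by
    have hc : Continuous fun t : ℝ => ∑ k ∈ Finset.range n, (1 - t) ^ k := by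
      continuity
    have := (hc.tendsto 0).comp httend
    simpa [Function.comp_def] using this
  have hfinal : Tendsto (fun x => (P {ω | x < ∑ i, X i ω ∧ ∀ i, X i ω ≤ x}).toReal / tailP μ x)
      atTop (nhds 0) := by
    have heq : (fun x => (P {ω | x < ∑ i, X i ω ∧ ∀ i, X i ω ≤ x}).toReal / tailP μ x)
        = fun x => convTail μ n x / tailP μ x - ∑ k ∈ Finset.range n, (1 - tailP μ x) ^ k := by
      funext x
      have ht := (htpos x).ne'
      rw [hmain x]
      have hgeo : 1 - (1 - tailP μ x) ^ n
          = tailP μ x * ∑ k ∈ Finset.range n, (1 - tailP μ x) ^ k := by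
        have := geom_sum_mul (1 - tailP μ x) n
        linear_combination this
      rw [hgeo]
      field_simp
    rw [heq]
    have := h1.sub h2
    simpa using this
  rw [isLittleO_iff_tendsto' (Eventually.of_forall fun x hx => absurd hx (htpos x).ne')]
  exact hfinal
end

section
/- (Kesten's bound) If F is subexponential, then for every ε > 0 there exists a finite constant K(ε) such that for all integers k ≥ 1 and all x ≥ 0, (1-F^{*k}(x)) ≤ K(ε)(1+ε)^k (1-F(x)). -/
open MeasureTheory ProbabilityTheory Filter Set Asymptotics
open scoped Classical
open scoped ENNReal

/-- `ℝ≥0∞`-valued tail of the `n`-fold convolution. -/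
noncomputable def kesC (μ : Measure ℝ) (n : ℕ) (x : ℝ) : ℝ≥0∞ :=
  (Measure.pi fun _ : Fin n => μ) {y | x < ∑ i, y i}

lemma kesC_toReal (μ : Measure ℝ) (n : ℕ) (x : ℝ) : convTail μ n x = (kesC μ n x).toReal := rfl

lemma kesC_le_one (μ : Measure ℝ) [IsProbabilityMeasure μ] (n : ℕ) (x : ℝ) :
    kesC μ n x ≤ 1 := prob_le_one

lemma kesC_ne_top (μ : Measure ℝ) [IsProbabilityMeasure μ] (n : ℕ) (x : ℝ) :
    kesC μ n x ≠ ∞ := ((kesC_le_one μ n x).trans_lt ENNReal.one_lt_top).ne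

lemma kesC_antitone (μ : Measure ℝ) (n : ℕ) : Antitone (kesC μ n) := by
  intro a b hab
  exact measure_mono (fun y hy => lt_of_le_of_lt hab hy)

lemma kesC_one (μ : Measure ℝ) (x : ℝ) : kesC μ 1 x = μ (Set.Ioi x) := by
  have h := measurePreserving_funUnique μ (Fin 1)
  have hm : MeasurableSet (Set.Ioi x) := measurableSet_Ioi
  have := h.measure_preimage hm.nullMeasurableSet
  unfold kesC
  rw [← this]
  congr 1
  ext y
  simp [MeasurableEquiv.funUnique, Equiv.funUnique]

lemma kesC_succ (μ : Measure ℝ) (n : ℕ) [IsProbabilityMeasure μ] (x : ℝ) :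
    kesC μ (n+1) x = ∫⁻ a, kesC μ n (x - a) ∂μ := by
  have h := measurePreserving_piFinSuccAbove (fun _ : Fin (n+1) => μ) 0
  have hs : MeasurableSet {p : ℝ × (Fin n → ℝ) | x < p.1 + ∑ i, p.2 i} := by
    apply measurableSet_lt measurable_const
    fun_prop
  have := h.measure_preimage hs.nullMeasurableSet
  have hpre : (MeasurableEquiv.piFinSuccAbove (fun _ => ℝ) 0) ⁻¹'
      {p : ℝ × (Fin n → ℝ) | x < p.1 + ∑ i, p.2 i} = {y : Fin (n+1) → ℝ | x < ∑ i, y i} := by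
    ext y
    simp [MeasurableEquiv.piFinSuccAbove, Fin.sum_univ_succ, Fin.succAbove, Fin.tail]
  rw [hpre] at this
  show (Measure.pi fun _ : Fin (n+1) => μ) {y | x < ∑ i, y i} = _
  rw [this, Measure.prod_apply hs]
  congr 1 with a
  congr 1
  ext z
  simp [kesC, sub_lt_iff_lt_add']

lemma kesC_meas (μ : Measure ℝ) (n : ℕ) (x : ℝ) :
    Measurable (fun a : ℝ => kesC μ n (x - a)) :=
  (kesC_antitone μ n).measurable.comp (measurable_const.sub measurable_id)

/-- Splitting of the convolution integral, upper bound. -/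
lemma kes_split (μ : Measure ℝ) [IsProbabilityMeasure μ] (h0 : μ (Set.Ioi 0) = 1)
    (n : ℕ) (x : ℝ) (hx : 0 ≤ x) :
    kesC μ (n+1) x ≤ (∫⁻ a in Set.Ioc 0 x, kesC μ n (x - a) ∂μ) + μ (Set.Ioi x) := by
  have hIic : μ (Set.Iic 0) = 0 := by
    have := measure_compl (measurableSet_Ioi (a := (0:ℝ))) (measure_ne_top μ _)
    rw [h0] at this
    simpa [compl_Ioi] using this
  rw [kesC_succ]
  have h1 : ∫⁻ a, kesC μ n (x - a) ∂μ = ∫⁻ a in Set.Ioi 0, kesC μ n (x - a) ∂μ := by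
    rw [← lintegral_add_compl (fun a => kesC μ n (x - a)) (measurableSet_Iic (a := (0:ℝ))),
      setLIntegral_measure_zero _ _ hIic, compl_Iic, zero_add]
  rw [h1, ← Set.Ioc_union_Ioi_eq_Ioi hx,
    lintegral_union measurableSet_Ioi (Set.Ioc_disjoint_Ioi le_rfl)]
  gcongr
  calc ∫⁻ a in Set.Ioi x, kesC μ n (x - a) ∂μ ≤ ∫⁻ _ in Set.Ioi x, 1 ∂μ :=
        setLIntegral_mono' measurableSet_Ioi (fun a _ => kesC_le_one μ n _)
    _ = μ (Set.Ioi x) := setLIntegral_one _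

/-- Splitting of the convolution integral for `n = 2`, lower bound. -/
lemma kes_split2 (μ : Measure ℝ) [IsProbabilityMeasure μ] (h0 : μ (Set.Ioi 0) = 1)
    (x : ℝ) (hx : 0 ≤ x) :
    (∫⁻ a in Set.Ioc 0 x, μ (Set.Ioi (x - a)) ∂μ) + μ (Set.Ioi x) ≤ kesC μ 2 x := by
  rw [show (2:ℕ) = 1 + 1 from rfl, kesC_succ]
  have h1 : ∫⁻ a, kesC μ 1 (x - a) ∂μ = ∫⁻ a, μ (Set.Ioi (x - a)) ∂μ := by
    congr 1 with a; rw [kesC_one]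
  rw [h1]
  calc (∫⁻ a in Set.Ioc 0 x, μ (Set.Ioi (x - a)) ∂μ) + μ (Set.Ioi x)
      ≤ (∫⁻ a in Set.Ioc 0 x, μ (Set.Ioi (x - a)) ∂μ)
        + ∫⁻ a in Set.Ioi x, μ (Set.Ioi (x - a)) ∂μ := by
        gcongr
        calc μ (Set.Ioi x) = ∫⁻ _ in Set.Ioi x, 1 ∂μ := (setLIntegral_one _).symm
          _ ≤ _ := by
            apply setLIntegral_mono' measurableSet_Ioi
            intro a ha
            rw [← h0]
            exact measure_mono (Set.Ioi_subset_Ioi (by simp at ha; linarith))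
    _ = ∫⁻ a in Set.Ioc 0 x ∪ Set.Ioi x, μ (Set.Ioi (x - a)) ∂μ :=
        (lintegral_union measurableSet_Ioi (Set.Ioc_disjoint_Ioi le_rfl)).symm
    _ ≤ ∫⁻ a, μ (Set.Ioi (x - a)) ∂μ := setLIntegral_le_lintegral _ _

/-- Kesten's bound: if `F` is subexponential, then for every `ε > 0`
there is `K(ε) < ∞` with `1-F^{*k}(x) ≤ K(ε)(1+ε)^k (1-F(x))` for all `k ≥ 1`, `x ≥ 0`. -/
theorem kesten_bound (μ : Measure ℝ) (hμ : Subexponential μ) :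
    ∀ ε : ℝ, 0 < ε → ∃ K : ℝ, 0 < K ∧
      ∀ k : ℕ, 1 ≤ k → ∀ x : ℝ, 0 ≤ x →
        convTail μ k x ≤ K * (1 + ε) ^ k * tailP μ x := by
  obtain ⟨hprob, h0, hpos, hlim⟩ := hμ
  intro ε hε
  -- step 1: find T₁ ≥ 0 with `convTail 2 x ≤ (2+ε) tail x` for `x ≥ T₁`
  obtain ⟨T₀, hT₀⟩ := (eventually_atTop).1
    ((hlim 2 le_rfl).eventually (gt_mem_nhds (by norm_num; linarith : (2:ℝ) < 2 + ε)))
  set T₁ : ℝ := max T₀ 0 with hT₁def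
  have hT₁0 : 0 ≤ T₁ := le_max_right _ _
  -- step 2: the key integral bound for `x ≥ T₁`
  have key : ∀ x : ℝ, T₁ ≤ x →
      (∫⁻ a in Set.Ioc 0 x, μ (Set.Ioi (x - a)) ∂μ) ≤ ENNReal.ofReal (1 + ε) * μ (Set.Ioi x) := by
    intro x hx
    have hx0 : 0 ≤ x := hT₁0.trans hx
    have hratio : convTail μ 2 x / tailP μ x < 2 + ε := hT₀ x ((le_max_left _ _).trans hx)
    have h2 : convTail μ 2 x ≤ (2 + ε) * tailP μ x := by
      have := (div_lt_iff₀ (hpos x)).1 hratio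
      linarith
    have hC2 : kesC μ 2 x ≤ ENNReal.ofReal (2 + ε) * μ (Set.Ioi x) := by
      have hC2r : kesC μ 2 x = ENNReal.ofReal (convTail μ 2 x) := by
        rw [kesC_toReal, ENNReal.ofReal_toReal (kesC_ne_top μ 2 x)]
      have hTr : μ (Set.Ioi x) = ENNReal.ofReal (tailP μ x) := by
        rw [tailP, ENNReal.ofReal_toReal (measure_ne_top μ _)]
      rw [hC2r, hTr, ← ENNReal.ofReal_mul (by linarith)]
      exact ENNReal.ofReal_le_ofReal h2
    have hsplit := kes_split2 μ h0 x hx0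
    have h2e : ENNReal.ofReal (2 + ε) = 1 + ENNReal.ofReal (1 + ε) := by
      rw [← ENNReal.ofReal_one, ← ENNReal.ofReal_add (by norm_num) (by linarith)]
      congr 1
      ring
    have : (∫⁻ a in Set.Ioc 0 x, μ (Set.Ioi (x - a)) ∂μ) + μ (Set.Ioi x)
        ≤ ENNReal.ofReal (1 + ε) * μ (Set.Ioi x) + μ (Set.Ioi x) := by
      calc _ ≤ kesC μ 2 x := hsplit
        _ ≤ ENNReal.ofReal (2 + ε) * μ (Set.Ioi x) := hC2
        _ = ENNReal.ofReal (1 + ε) * μ (Set.Ioi x) + μ (Set.Ioi x) := by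
            rw [h2e, add_mul, one_mul, add_comm]
    exact (ENNReal.add_le_add_iff_right (measure_ne_top μ _)).1 this
  -- constants
  set c₀ : ℝ := (tailP μ T₁)⁻¹ with hc₀def
  have hc₀pos : 0 < c₀ := inv_pos.2 (hpos T₁)
  set A : ℝ := c₀ + 1/ε + 1 with hAdef
  have hApos : 0 < A := by positivity
  set K : ℕ → ℝ := fun n => A * (1 + ε)^n - 1/ε with hKdef
  clear_value T₁ c₀ A K
  have hKmono : ∀ n : ℕ, 1 ≤ n → c₀ + 1 ≤ K n := by
    intro n hn
    have h1 : (1:ℝ) + ε ≤ (1+ε)^n := by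
      calc (1:ℝ) + ε = (1+ε)^1 := (pow_one _).symm
        _ ≤ (1+ε)^n := pow_le_pow_right₀ (by linarith) hn
    have h2 : A * (1 + ε) ≤ A * (1+ε)^n := mul_le_mul_of_nonneg_left h1 hApos.le
    have hA0 : c₀ + 1 + 1/ε ≤ A := by rw [hAdef]; ring_nf; linarith
    have hA1 : A ≤ A * (1+ε) := by nlinarith
    simp only [hKdef]
    linarith
  have hKrec : ∀ n : ℕ, K (n+1) = 1 + (1 + ε) * K n := by
    intro n
    simp only [hKdef]
    have : (1+ε)^(n+1) = (1+ε) * (1+ε)^n := pow_succ' _ _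
    rw [this]
    field_simp
    ring
  -- main induction
  have main : ∀ n : ℕ, 1 ≤ n → ∀ x : ℝ, 0 ≤ x →
      kesC μ n x ≤ ENNReal.ofReal (K n) * μ (Set.Ioi x) := by
    intro n hn
    induction n, hn using Nat.le_induction with
    | base =>
      intro x hx
      rw [kesC_one]
      apply le_mul_of_one_le_left zero_le
      rw [← ENNReal.ofReal_one]
      exact ENNReal.ofReal_le_ofReal (by linarith [hKmono 1 le_rfl, hc₀pos.le])
    | succ n hn ih =>
      intro x hx
      have hKn1 : c₀ + 1 ≤ K (n+1) := hKmono (n+1) (by omega)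
      rcases lt_or_ge x T₁ with hxT | hxT
      · -- small x : use the trivial bound
        have h1 : kesC μ (n+1) x ≤ 1 := kesC_le_one μ _ _
        have h2 : (1:ℝ≥0∞) = ENNReal.ofReal c₀ * μ (Set.Ioi T₁) := by
          rw [show μ (Set.Ioi T₁) = ENNReal.ofReal (tailP μ T₁) from
            (ENNReal.ofReal_toReal (measure_ne_top μ _)).symm,
            ← ENNReal.ofReal_mul hc₀pos.le, hc₀def,
            inv_mul_cancel₀ (hpos T₁).ne', ENNReal.ofReal_one]
        calc kesC μ (n+1) x ≤ 1 := h1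
          _ = ENNReal.ofReal c₀ * μ (Set.Ioi T₁) := h2
          _ ≤ ENNReal.ofReal (K (n+1)) * μ (Set.Ioi x) := by
              exact mul_le_mul' (ENNReal.ofReal_le_ofReal (by linarith))
                (measure_mono (Set.Ioi_subset_Ioi hxT.le))
      · -- large x : use the convolution inequality
        have hKn0 : 0 ≤ K n := by linarith [hKmono n hn, hc₀pos.le]
        calc kesC μ (n+1) x
            ≤ (∫⁻ a in Set.Ioc 0 x, kesC μ n (x - a) ∂μ) + μ (Set.Ioi x) :=
              kes_split μ h0 n x hx
          _ ≤ (∫⁻ a in Set.Ioc 0 x, ENNReal.ofReal (K n) * μ (Set.Ioi (x - a)) ∂μ)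
              + μ (Set.Ioi x) := by
              refine add_le_add_left (setLIntegral_mono' measurableSet_Ioc
                fun a ha => ih (x - a) (by simp at ha; linarith [ha.2])) _
          _ = ENNReal.ofReal (K n) * (∫⁻ a in Set.Ioc 0 x, μ (Set.Ioi (x - a)) ∂μ)
              + μ (Set.Ioi x) := by
              rw [lintegral_const_mul' _ _ ENNReal.ofReal_ne_top]
          _ ≤ ENNReal.ofReal (K n) * (ENNReal.ofReal (1 + ε) * μ (Set.Ioi x))
              + μ (Set.Ioi x) := by
              gcongr
              exact key x hxT
          _ = ENNReal.ofReal (K (n+1)) * μ (Set.Ioi x) := by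
              have e1 : ENNReal.ofReal (K (n+1)) = ENNReal.ofReal ((1+ε) * K n) + 1 := by
                rw [hKrec n, add_comm, ENNReal.ofReal_add (mul_nonneg (by linarith) hKn0)
                  (by norm_num), ENNReal.ofReal_one]
              rw [e1, add_mul, one_mul, ← mul_assoc, ← ENNReal.ofReal_mul hKn0,
                mul_comm (K n) (1+ε)]
  -- conclusion
  refine ⟨A, hApos, fun k hk x hx => ?_⟩
  have h := main k hk x hx
  have h2 : convTail μ k x ≤ K k * tailP μ x := by
    rw [kesC_toReal]
    calc (kesC μ k x).toReal ≤ (ENNReal.ofReal (K k) * μ (Set.Ioi x)).toReal := by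
          apply ENNReal.toReal_mono _ h
          exact ENNReal.mul_ne_top ENNReal.ofReal_ne_top (measure_ne_top μ _)
      _ = K k * tailP μ x := by
          rw [ENNReal.toReal_mul, ENNReal.toReal_ofReal
            (by linarith [hKmono k hk, hc₀pos.le] : 0 ≤ K k)]
          rfl
  calc convTail μ k x ≤ K k * tailP μ x := h2
    _ ≤ A * (1 + ε)^k * tailP μ x := by
        apply mul_le_mul_of_nonneg_right _ (ENNReal.toReal_nonneg)
        simp only [hKdef]
        have : 0 < 1/ε := by positivity
        linarith
end

section
/- Let X₁,…,Xₙ be independent nonnegative random variables with tail distributions F̄ᵢ, and suppose there is a subexponential distribution F such that F̄ᵢ(x) ∼ cᵢ F̄(x) as x → ∞ with cᵢ ≥ 0 and Σᵢ cᵢ > 0. Then P[X₁+⋯+Xₙ > x, and Xᵢ ≤ x for all 1 ≤ i ≤ n] = o(F̄(x)) as x → ∞. -/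
open MeasureTheory ProbabilityTheory Filter Set Asymptotics
open scoped Classical

open scoped ENNReal

section aux
variable {μ : Measure ℝ}

lemma tailP_nonneg (μ : Measure ℝ) (x : ℝ) : 0 ≤ tailP μ x := ENNReal.toReal_nonneg

lemma tailP_anti [IsFiniteMeasure μ] : Antitone (tailP μ) := fun x y hxy => by
  apply ENNReal.toReal_mono (measure_ne_top μ _)
  exact measure_mono (Set.Ioi_subset_Ioi hxy)

lemma tendsto_measure_Ioi_zero (μ : Measure ℝ) [IsFiniteMeasure μ] :
    Tendsto (fun x => μ (Set.Ioi x)) atTop (nhds 0) := by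
  have h := tendsto_measure_iInter_atTop (μ := μ) (s := fun x : ℝ => Set.Ioi x)
    (fun x => measurableSet_Ioi.nullMeasurableSet)
    (fun x y hxy => Set.Ioi_subset_Ioi hxy) ⟨0, measure_ne_top μ _⟩
  have : ⋂ x : ℝ, Set.Ioi x = (∅ : Set ℝ) := by
    ext t; simp only [Set.mem_iInter, Set.mem_Ioi, Set.mem_empty_iff_false, iff_false, not_forall]
    exact ⟨t, lt_irrefl t⟩
  rw [this, measure_empty] at h
  exact h

lemma tailP_tendsto_zero (μ : Measure ℝ) [IsFiniteMeasure μ] :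
    Tendsto (tailP μ) atTop (nhds 0) := by
  have := (ENNReal.tendsto_toReal (by simp)).comp (tendsto_measure_Ioi_zero μ)
  exact this

lemma convTail_two (μ : Measure ℝ) [SigmaFinite μ] (x : ℝ) :
    convTail μ 2 x = ((μ.prod μ) {p : ℝ × ℝ | x < p.1 + p.2}).toReal := by
  unfold convTail
  congr 1
  have hmp := measurePreserving_finTwoArrow μ
  have : {y : Fin 2 → ℝ | x < ∑ i, y i} =
      MeasurableEquiv.finTwoArrow ⁻¹' {p : ℝ × ℝ | x < p.1 + p.2} := by
    ext y
    simp [Fin.sum_univ_two, MeasurableEquiv.finTwoArrow]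
  rw [this, ← hmp.measure_preimage]
  · exact (measurableSet_lt measurable_const (measurable_fst.add measurable_snd)).nullMeasurableSet

end aux

/-- The "both large and sum large" event. -/
def bigE (h x : ℝ) : Set (ℝ × ℝ) := {p : ℝ × ℝ | h < p.1 ∧ h < p.2 ∧ x < p.1 + p.2}

lemma measurableSet_bigE (h x : ℝ) : MeasurableSet (bigE h x) := by
  apply MeasurableSet.inter (measurableSet_lt measurable_const measurable_fst)
  exact MeasurableSet.inter (measurableSet_lt measurable_const measurable_snd)
    (measurableSet_lt measurable_const (measurable_fst.add measurable_snd))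

lemma bigE_fst_preimage (h x t : ℝ) :
    Prod.mk t ⁻¹' bigE h x = if h < t then Set.Ioi (max h (x - t)) else ∅ := by
  ext s
  by_cases ht : h < t
  · simp only [bigE, Set.mem_preimage, Set.mem_setOf_eq, ht, if_true, true_and, Set.mem_Ioi,
      max_lt_iff, sub_lt_iff_lt_add]
    constructor
    · rintro ⟨h1, h2⟩; exact ⟨h1, by linarith⟩
    · rintro ⟨h1, h2⟩; exact ⟨h1, by linarith⟩
  · simp only [bigE, Set.mem_preimage, Set.mem_setOf_eq, ht, if_false, Set.mem_empty_iff_false,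
      iff_false]
    tauto

lemma bigE_snd_preimage (h x s : ℝ) :
    {t : ℝ | (t, s) ∈ bigE h x} = if h < s then Set.Ioi (max h (x - s)) else ∅ := by
  ext t
  by_cases hs : h < s
  · simp only [bigE, Set.mem_setOf_eq, hs, if_true, Set.mem_Ioi, max_lt_iff, sub_lt_iff_lt_add]
    constructor
    · rintro ⟨h1, _, h2⟩; exact ⟨h1, by linarith⟩
    · rintro ⟨h1, h2⟩; refine ⟨h1, ?_, by linarith⟩; simpa using hs
  · simp only [bigE, Set.mem_setOf_eq, hs, if_false, Set.mem_empty_iff_false, iff_false]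
    tauto

/-- domination on the big event -/
lemma bigE_prod_le {ν₁ ν₂ μ : Measure ℝ} [IsFiniteMeasure ν₁] [IsFiniteMeasure ν₂] [IsFiniteMeasure μ]
    (h x : ℝ) (K₁ K₂ : ℝ≥0∞) (hK₁ : K₁ ≠ ⊤) (hK₂ : K₂ ≠ ⊤)
    (h1 : ∀ t, h ≤ t → ν₁ (Set.Ioi t) ≤ K₁ * μ (Set.Ioi t))
    (h2 : ∀ t, h ≤ t → ν₂ (Set.Ioi t) ≤ K₂ * μ (Set.Ioi t)) :
    (ν₁.prod ν₂) (bigE h x) ≤ K₁ * K₂ * (μ.prod μ) (bigE h x) := by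
  have hE := measurableSet_bigE h x
  have step2 : (ν₁.prod ν₂) (bigE h x) ≤ K₂ * (ν₁.prod μ) (bigE h x) := by
    rw [Measure.prod_apply hE, Measure.prod_apply hE, ← lintegral_const_mul' _ _ hK₂]
    refine lintegral_mono fun t => ?_
    rw [bigE_fst_preimage]
    split_ifs with ht
    · exact h2 _ (le_max_left _ _)
    · simp
  have step1 : (ν₁.prod μ) (bigE h x) ≤ K₁ * (μ.prod μ) (bigE h x) := by
    rw [Measure.prod_apply_symm hE, Measure.prod_apply_symm hE, ← lintegral_const_mul' _ _ hK₁]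
    refine lintegral_mono fun s => ?_
    have : (fun t => (t, s)) ⁻¹' bigE h x = {t : ℝ | (t, s) ∈ bigE h x} := rfl
    rw [this, bigE_snd_preimage]
    split_ifs with hs
    · exact h1 _ (le_max_left _ _)
    · simp
  calc (ν₁.prod ν₂) (bigE h x) ≤ K₂ * (ν₁.prod μ) (bigE h x) := step2
    _ ≤ K₂ * (K₁ * (μ.prod μ) (bigE h x)) := by exact mul_le_mul_right step1 _
    _ = K₁ * K₂ * (μ.prod μ) (bigE h x) := by ring

lemma bigE_bound (μ : Measure ℝ) [IsFiniteMeasure μ] {h x : ℝ} (hh : 0 ≤ h) (hx : h < x) :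
    (μ.prod μ) (bigE h x) + 2 * (μ (Set.Ioc 0 h) * μ (Set.Ioi x)) ≤
      (μ.prod μ) {p : ℝ × ℝ | x < p.1 + p.2} := by
  set A := bigE h x
  set B := Set.Ioc 0 h ×ˢ Set.Ioi x
  set C := Set.Ioi x ×ˢ Set.Ioc 0 h
  have hBm : MeasurableSet B := measurableSet_Ioc.prod measurableSet_Ioi
  have hCm : MeasurableSet C := measurableSet_Ioi.prod measurableSet_Ioc
  have hsub : A ∪ (B ∪ C) ⊆ {p : ℝ × ℝ | x < p.1 + p.2} := by
    rintro ⟨t, s⟩ hp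
    rcases hp with hp | hp | hp
    · exact hp.2.2
    · rcases hp with ⟨⟨ht0, _⟩, hs⟩; simp only [Set.mem_setOf_eq]; linarith [Set.mem_Ioi.mp hs]
    · rcases hp with ⟨ht, ⟨hs0, _⟩⟩; simp only [Set.mem_setOf_eq]; linarith [Set.mem_Ioi.mp ht]
  have hdBC : Disjoint B C := by
    rw [Set.disjoint_left]; rintro ⟨t, s⟩ ⟨⟨_, ht⟩, _⟩ ⟨ht', _⟩
    exact absurd (Set.mem_Ioi.mp ht') (by linarith)
  have hdABC : Disjoint A (B ∪ C) := by
    rw [Set.disjoint_left]; rintro ⟨t, s⟩ ⟨ht, hs, _⟩ (⟨⟨_, ht'⟩, _⟩ | ⟨_, _, hs'⟩)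
    · exact absurd ht (by simp at ht' ⊢; linarith)
    · exact absurd hs (by linarith)
  have e1 : (μ.prod μ) (A ∪ (B ∪ C)) = (μ.prod μ) A + ((μ.prod μ) B + (μ.prod μ) C) := by
    rw [measure_union hdABC (hBm.union hCm), measure_union hdBC hCm]
  calc (μ.prod μ) A + 2 * (μ (Set.Ioc 0 h) * μ (Set.Ioi x))
      = (μ.prod μ) A + ((μ.prod μ) B + (μ.prod μ) C) := by
        rw [Measure.prod_prod, Measure.prod_prod, two_mul,
          mul_comm (μ (Set.Ioi x)) (μ (Set.Ioc 0 h))]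
    _ = (μ.prod μ) (A ∪ (B ∪ C)) := e1.symm
    _ ≤ _ := measure_mono hsub

section longtail
variable {μ : Measure ℝ}

lemma tendsto_Ioc_measure (μ : Measure ℝ) [IsFiniteMeasure μ] (y : ℝ) :
    Tendsto (fun x => (μ (Set.Ioc y x)).toReal) atTop (nhds (tailP μ y)) := by
  have h := tendsto_measure_iUnion_atTop (μ := μ) (s := fun x : ℝ => Set.Ioc y x)
    (fun x z hxz => Set.Ioc_subset_Ioc_right hxz)
  have hU : ⋃ x : ℝ, Set.Ioc y x = Set.Ioi y := by
    ext t; simp only [Set.mem_iUnion, Set.mem_Ioc, Set.mem_Ioi]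
    exact ⟨fun ⟨_, h1, _⟩ => h1, fun ht => ⟨t, ht, le_refl t⟩⟩
  rw [hU] at h
  exact (ENNReal.tendsto_toReal (measure_ne_top μ _)).comp h

/-- Long-tailedness of a subexponential distribution. -/
lemma longtail (hμ : Subexponential μ) {y : ℝ} (hy : 0 ≤ y) :
    Tendsto (fun x => tailP μ (x - y) / tailP μ x) atTop (nhds 1) := by
  haveI : IsProbabilityMeasure μ := hμ.1
  obtain ⟨_, hsupp, hpos, hconv⟩ := hμ
  set fy : ℝ := tailP μ y with hfy
  set my : ℝ := (μ (Set.Ioc 0 y)).toReal with hmy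
  have hfy_pos : 0 < fy := hpos y
  have hsum : my + fy = 1 := by
    rw [hmy, hfy, tailP, ← ENNReal.toReal_add (measure_ne_top μ _) (measure_ne_top μ _)]
    rw [← measure_union (by simp [Set.disjoint_left]) measurableSet_Ioi]
    rw [Set.Ioc_union_Ioi_eq_Ioi hy, hsupp]
    simp
  -- key inequality
  have key : ∀ x : ℝ, y < x →
      (1 + my) * tailP μ x + (μ (Set.Ioc y x)).toReal * tailP μ (x - y) ≤ convTail μ 2 x := by
    intro x hx
    have hsub : (Set.Ioi x ×ˢ Set.Ioi 0) ∪ ((Set.Ioc 0 y ×ˢ Set.Ioi x) ∪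
        (Set.Ioc y x ×ˢ Set.Ioi (x - y))) ⊆ {p : ℝ × ℝ | x < p.1 + p.2} := by
      rintro ⟨t, s⟩ hp
      rcases hp with ⟨ht, hs⟩ | ⟨⟨ht, _⟩, hs⟩ | ⟨⟨ht, _⟩, hs⟩ <;>
        simp only [Set.mem_Ioi, Set.mem_setOf_eq] at * <;> linarith
    have hd1 : Disjoint (Set.Ioc 0 y ×ˢ Set.Ioi x) (Set.Ioc y x ×ˢ Set.Ioi (x - y)) := by
      rw [Set.disjoint_left]; rintro ⟨t, s⟩ ⟨⟨_, ht⟩, _⟩ ⟨⟨ht', _⟩, _⟩; exact absurd ht' (by linarith)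
    have hd2 : Disjoint (Set.Ioi x ×ˢ Set.Ioi 0)
        ((Set.Ioc 0 y ×ˢ Set.Ioi x) ∪ (Set.Ioc y x ×ˢ Set.Ioi (x - y))) := by
      rw [Set.disjoint_left]
      rintro ⟨t, s⟩ ⟨ht, _⟩ (⟨⟨_, ht'⟩, _⟩ | ⟨⟨_, ht'⟩, _⟩) <;>
        simp only [Set.mem_Ioi] at * <;> linarith
    have hm1 : MeasurableSet (Set.Ioc 0 y ×ˢ Set.Ioi x) := measurableSet_Ioc.prod measurableSet_Ioi
    have hm2 : MeasurableSet (Set.Ioc y x ×ˢ Set.Ioi (x - y)) :=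
      measurableSet_Ioc.prod measurableSet_Ioi
    have e1 : (μ.prod μ) ((Set.Ioi x ×ˢ Set.Ioi 0) ∪ ((Set.Ioc 0 y ×ˢ Set.Ioi x) ∪
        (Set.Ioc y x ×ˢ Set.Ioi (x - y)))) =
        μ (Set.Ioi x) * μ (Set.Ioi 0) + (μ (Set.Ioc 0 y) * μ (Set.Ioi x) +
          μ (Set.Ioc y x) * μ (Set.Ioi (x - y))) := by
      rw [measure_union hd2 (hm1.union hm2), measure_union hd1 hm2,
        Measure.prod_prod, Measure.prod_prod, Measure.prod_prod]
    have hle := measure_mono (μ := μ.prod μ) hsub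
    rw [e1] at hle
    have hle' : (μ (Set.Ioi x) * μ (Set.Ioi 0) + (μ (Set.Ioc 0 y) * μ (Set.Ioi x) +
          μ (Set.Ioc y x) * μ (Set.Ioi (x - y)))).toReal ≤ convTail μ 2 x := by
      rw [convTail_two]
      exact ENNReal.toReal_mono (measure_ne_top _ _) hle
    refine le_trans (le_of_eq ?_) hle'
    rw [ENNReal.toReal_add (ENNReal.mul_ne_top (measure_ne_top _ _) (measure_ne_top _ _))
        (ENNReal.add_ne_top.mpr ⟨ENNReal.mul_ne_top (measure_ne_top _ _) (measure_ne_top _ _),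
          ENNReal.mul_ne_top (measure_ne_top _ _) (measure_ne_top _ _)⟩),
      ENNReal.toReal_add (ENNReal.mul_ne_top (measure_ne_top _ _) (measure_ne_top _ _))
        (ENNReal.mul_ne_top (measure_ne_top _ _) (measure_ne_top _ _)),
      ENNReal.toReal_mul, ENNReal.toReal_mul, ENNReal.toReal_mul, hsupp]
    simp only [ENNReal.toReal_one, mul_one]
    simp only [tailP, hmy]
    ring
  -- upper bound function
  have hg := tendsto_Ioc_measure μ y
  have hφ : Tendsto (fun x => (convTail μ 2 x / tailP μ x - (1 + my)) / (μ (Set.Ioc y x)).toReal)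
      atTop (nhds 1) := by
    have h2 := hconv 2 le_rfl
    have : Tendsto (fun x => convTail μ 2 x / tailP μ x - (1 + my)) atTop (nhds fy) := by
      have := h2.sub (tendsto_const_nhds (x := (1 + my : ℝ)))
      convert this using 2
      push_cast
      linarith
    have h3 := this.div hg (ne_of_gt hfy_pos)
    have heq : fy / tailP μ y = 1 := div_self (ne_of_gt hfy_pos)
    rw [heq] at h3; exact h3
  have hev : ∀ᶠ x in atTop, tailP μ (x - y) / tailP μ x ≤
      (convTail μ 2 x / tailP μ x - (1 + my)) / (μ (Set.Ioc y x)).toReal := by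
    have hgev : ∀ᶠ x in atTop, 0 < (μ (Set.Ioc y x)).toReal :=
      hg.eventually (eventually_gt_nhds hfy_pos)
    filter_upwards [hgev, eventually_gt_atTop y] with x hgx hxy
    have hk := key x hxy
    have hpx := hpos x
    rw [div_le_div_iff₀ hpx hgx, sub_mul, div_mul_cancel₀ _ (ne_of_gt hpx), mul_comm]
    linarith [hk]
  have hlow : ∀ᶠ x in atTop, (1:ℝ) ≤ tailP μ (x - y) / tailP μ x := by
    refine Eventually.of_forall fun x => ?_
    rw [le_div_iff₀ (hpos x)]
    simpa using tailP_anti (μ := μ) (by linarith : x - y ≤ x)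
  exact tendsto_of_tendsto_of_tendsto_of_le_of_le' tendsto_const_nhds hφ hlow hev

end longtail

section main

lemma toReal_le_add3 {a b c d : ℝ≥0∞} (h : a ≤ b + (c + d)) (hb : b ≠ ⊤) (hc : c ≠ ⊤)
    (hd : d ≠ ⊤) : a.toReal ≤ b.toReal + c.toReal + d.toReal := by
  have := ENNReal.toReal_mono (by
    exact ENNReal.add_ne_top.mpr ⟨hb, ENNReal.add_ne_top.mpr ⟨hc, hd⟩⟩) h
  rw [ENNReal.toReal_add hb (ENNReal.add_ne_top.mpr ⟨hc, hd⟩), ENNReal.toReal_add hc hd] at this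
  linarith

lemma two_var_tendsto {μ : Measure ℝ} (hμ : Subexponential μ)
    {Ω : Type} [MeasurableSpace Ω] (P : Measure Ω) [IsProbabilityMeasure P]
    {Y₁ Y₂ : Ω → ℝ} {c₁ c₂ : ℝ}
    (hm₁ : Measurable Y₁) (hm₂ : Measurable Y₂)
    (hn₁ : ∀ ω, 0 ≤ Y₁ ω) (hn₂ : ∀ ω, 0 ≤ Y₂ ω)
    (hind : IndepFun Y₁ Y₂ P)
    (ht₁ : Tendsto (fun x => (P {ω | x < Y₁ ω}).toReal / tailP μ x) atTop (nhds c₁))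
    (ht₂ : Tendsto (fun x => (P {ω | x < Y₂ ω}).toReal / tailP μ x) atTop (nhds c₂)) :
    Tendsto (fun x => (P {ω | x < Y₁ ω + Y₂ ω}).toReal / tailP μ x) atTop (nhds (c₁ + c₂)) := by
  haveI : IsProbabilityMeasure μ := hμ.1
  have hsupp := hμ.2.1
  have hpos := hμ.2.2.1
  have hconv := hμ.2.2.2 2 le_rfl
  set p₁ : ℝ → ℝ := fun x => (P {ω | x < Y₁ ω}).toReal with hp₁
  set p₂ : ℝ → ℝ := fun x => (P {ω | x < Y₂ ω}).toReal with hp₂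
  set S : ℝ → ℝ := fun x => (P {ω | x < Y₁ ω + Y₂ ω}).toReal with hS
  have hc₁ : 0 ≤ c₁ :=
    ge_of_tendsto' ht₁ fun x => div_nonneg ENNReal.toReal_nonneg (hpos x).le
  have hc₂ : 0 ≤ c₂ :=
    ge_of_tendsto' ht₂ fun x => div_nonneg ENNReal.toReal_nonneg (hpos x).le
  have hf0 : Tendsto (tailP μ) atTop (nhds 0) := tailP_tendsto_zero μ
  have hp₂0 : Tendsto p₂ atTop (nhds 0) := by
    have h := ht₂.mul hf0
    rw [mul_zero] at h
    exact h.congr fun x => div_mul_cancel₀ _ (ne_of_gt (hpos x))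
  -- lower bound
  have hlow : ∀ x, p₁ x + p₂ x - p₁ x * p₂ x ≤ S x := by
    intro x
    have hB : MeasurableSet (Set.Ioi x) := measurableSet_Ioi
    have hunion : {ω | x < Y₁ ω} ∪ {ω | x < Y₂ ω} ⊆ {ω | x < Y₁ ω + Y₂ ω} := by
      rintro ω (hω | hω) <;> simp only [Set.mem_setOf_eq] at * <;>
        [linarith [hn₂ ω]; linarith [hn₁ ω]]
    have hPint : P ({ω | x < Y₁ ω} ∩ {ω | x < Y₂ ω}) = P {ω | x < Y₁ ω} * P {ω | x < Y₂ ω} := by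
      have := hind.measure_inter_preimage_eq_mul (Set.Ioi x) (Set.Ioi x) hB hB
      exact this
    have hmui := measure_union_add_inter (μ := P) {ω | x < Y₁ ω}
      (measurableSet_lt measurable_const hm₂ : MeasurableSet {ω | x < Y₂ ω})
    have hle : P {ω | x < Y₁ ω} + P {ω | x < Y₂ ω} ≤
        P {ω | x < Y₁ ω + Y₂ ω} + P {ω | x < Y₁ ω} * P {ω | x < Y₂ ω} := by
      rw [← hmui, hPint]
      exact add_le_add (measure_mono hunion) le_rfl
    have h2 := ENNReal.toReal_mono (ENNReal.add_ne_top.mpr ⟨measure_ne_top _ _,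
      ENNReal.mul_ne_top (measure_ne_top _ _) (measure_ne_top _ _)⟩) hle
    rw [ENNReal.toReal_add (measure_ne_top _ _) (measure_ne_top _ _),
      ENNReal.toReal_add (measure_ne_top _ _)
        (ENNReal.mul_ne_top (measure_ne_top _ _) (measure_ne_top _ _)),
      ENNReal.toReal_mul] at h2
    simp only [hp₁, hp₂, hS]
    linarith
  have hlowt : Tendsto (fun x => p₁ x / tailP μ x + p₂ x / tailP μ x -
      (p₁ x / tailP μ x) * p₂ x) atTop (nhds (c₁ + c₂)) := by
    have := (ht₁.add ht₂).sub (ht₁.mul hp₂0)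
    simpa using this
  have hlowev : ∀ x, p₁ x / tailP μ x + p₂ x / tailP μ x -
      (p₁ x / tailP μ x) * p₂ x ≤ S x / tailP μ x := by
    intro x
    rw [← add_div, div_mul_eq_mul_div, ← sub_div]
    exact div_le_div_of_nonneg_right (hlow x) (hpos x).le
  -- laws and joint law
  set ν₁ : Measure ℝ := P.map Y₁ with hν₁
  set ν₂ : Measure ℝ := P.map Y₂ with hν₂
  haveI : IsProbabilityMeasure ν₁ := Measure.isProbabilityMeasure_map hm₁.aemeasurable
  haveI : IsProbabilityMeasure ν₂ := Measure.isProbabilityMeasure_map hm₂.aemeasurable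
  have hmap : P.map (fun ω => (Y₁ ω, Y₂ ω)) = ν₁.prod ν₂ :=
    (indepFun_iff_map_prod_eq_prod_map_map hm₁.aemeasurable hm₂.aemeasurable).mp hind
  have hν₁Ioi : ∀ t : ℝ, ν₁ (Set.Ioi t) = P {ω | t < Y₁ ω} := fun t => by
    rw [hν₁, Measure.map_apply hm₁ measurableSet_Ioi]; rfl
  have hν₂Ioi : ∀ t : ℝ, ν₂ (Set.Ioi t) = P {ω | t < Y₂ ω} := fun t => by
    rw [hν₂, Measure.map_apply hm₂ measurableSet_Ioi]; rfl
  -- upper bound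
  have hupper : ∀ ε : ℝ, 0 < ε → ∀ᶠ x in atTop, S x / tailP μ x ≤ c₁ + c₂ + ε := by
    intro ε hε
    set K₁ : ℝ := c₁ + 1 with hK₁def
    set K₂ : ℝ := c₂ + 1 with hK₂def
    have hK₁ : 0 < K₁ := by simp only [hK₁def]; linarith
    have hK₂ : 0 < K₂ := by simp only [hK₂def]; linarith
    have hKK : 0 < K₁ * K₂ := mul_pos hK₁ hK₂
    set δ : ℝ := ε / (2 * (K₁ * K₂)) with hδdef
    have hδ : 0 < δ := by positivity
    obtain ⟨a₁, ha₁⟩ := eventually_atTop.mp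
      (ht₁.eventually (eventually_le_nhds (by linarith : c₁ < K₁)))
    obtain ⟨a₂, ha₂⟩ := eventually_atTop.mp
      (ht₂.eventually (eventually_le_nhds (by linarith : c₂ < K₂)))
    obtain ⟨a₃, ha₃⟩ := eventually_atTop.mp
      (hf0.eventually (eventually_lt_nhds (by positivity : (0:ℝ) < δ/8)))
    set h : ℝ := max 0 (max a₁ (max a₂ a₃)) with hhdef
    have hh0 : (0:ℝ) ≤ h := le_max_left _ _
    have hha₁ : a₁ ≤ h := le_trans (le_max_left _ _) (le_max_right _ _)
    have hha₂ : a₂ ≤ h := le_trans (le_trans (le_max_left _ _) (le_max_right _ _)) (le_max_right _ _)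
    have hha₃ : a₃ ≤ h := le_trans (le_trans (le_max_right _ _) (le_max_right _ _)) (le_max_right _ _)
    have hfh : tailP μ h < δ/8 := ha₃ h hha₃
    -- tail domination in ENNReal
    have hdom₁ : ∀ t, h ≤ t → ν₁ (Set.Ioi t) ≤ ENNReal.ofReal K₁ * μ (Set.Ioi t) := by
      intro t ht
      have h1 : p₁ t ≤ K₁ * tailP μ t := by
        have := ha₁ t (le_trans hha₁ ht)
        rw [div_le_iff₀ (hpos t)] at this
        linarith
      rw [hν₁Ioi]
      calc P {ω | t < Y₁ ω} = ENNReal.ofReal (p₁ t) :=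
            (ENNReal.ofReal_toReal (measure_ne_top _ _)).symm
        _ ≤ ENNReal.ofReal (K₁ * tailP μ t) := ENNReal.ofReal_le_ofReal h1
        _ = ENNReal.ofReal K₁ * μ (Set.Ioi t) := by
            rw [ENNReal.ofReal_mul hK₁.le, tailP, ENNReal.ofReal_toReal (measure_ne_top _ _)]
    have hdom₂ : ∀ t, h ≤ t → ν₂ (Set.Ioi t) ≤ ENNReal.ofReal K₂ * μ (Set.Ioi t) := by
      intro t ht
      have h1 : p₂ t ≤ K₂ * tailP μ t := by
        have := ha₂ t (le_trans hha₂ ht)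
        rw [div_le_iff₀ (hpos t)] at this
        linarith
      rw [hν₂Ioi]
      calc P {ω | t < Y₂ ω} = ENNReal.ofReal (p₂ t) :=
            (ENNReal.ofReal_toReal (measure_ne_top _ _)).symm
        _ ≤ ENNReal.ofReal (K₂ * tailP μ t) := ENNReal.ofReal_le_ofReal h1
        _ = ENNReal.ofReal K₂ * μ (Set.Ioi t) := by
            rw [ENNReal.ofReal_mul hK₂.le, tailP, ENNReal.ofReal_toReal (measure_ne_top _ _)]
    -- the big event
    set q : ℝ → ℝ := fun x => ((μ.prod μ) (bigE h x)).toReal with hq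
    have hbig : ∀ x, (P {ω | h < Y₁ ω ∧ h < Y₂ ω ∧ x < Y₁ ω + Y₂ ω}).toReal ≤ K₁ * K₂ * q x := by
      intro x
      have hEP : P {ω | h < Y₁ ω ∧ h < Y₂ ω ∧ x < Y₁ ω + Y₂ ω} = (ν₁.prod ν₂) (bigE h x) := by
        rw [← hmap, Measure.map_apply (hm₁.prodMk hm₂) (measurableSet_bigE h x)]
        rfl
      rw [hEP]
      have hle := bigE_prod_le (ν₁ := ν₁) (ν₂ := ν₂) (μ := μ) h x
        (ENNReal.ofReal K₁) (ENNReal.ofReal K₂) ENNReal.ofReal_ne_top ENNReal.ofReal_ne_top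
        hdom₁ hdom₂
      have h2 := ENNReal.toReal_mono (by
        exact ENNReal.mul_ne_top (ENNReal.mul_ne_top ENNReal.ofReal_ne_top ENNReal.ofReal_ne_top)
          (measure_ne_top _ _)) hle
      rw [ENNReal.toReal_mul, ENNReal.toReal_mul, ENNReal.toReal_ofReal hK₁.le,
        ENNReal.toReal_ofReal hK₂.le] at h2
      exact h2
    -- bound on q
    set mh : ℝ := (μ (Set.Ioc 0 h)).toReal with hmh
    have hsumh : mh + tailP μ h = 1 := by
      rw [hmh, tailP, ← ENNReal.toReal_add (measure_ne_top μ _) (measure_ne_top μ _),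
        ← measure_union (by simp [Set.disjoint_left]) measurableSet_Ioi,
        Set.Ioc_union_Ioi_eq_Ioi hh0, hsupp]
      simp
    have hqb : ∀ x, h < x → q x / tailP μ x ≤ convTail μ 2 x / tailP μ x - 2 * mh := by
      intro x hx
      have hkey := bigE_bound μ hh0 hx
      have h2 := ENNReal.toReal_mono (measure_ne_top _ _)
        (le_trans hkey (le_of_eq rfl))
      rw [ENNReal.toReal_add (measure_ne_top _ _) (by
          exact ENNReal.mul_ne_top (by simp) (ENNReal.mul_ne_top (measure_ne_top _ _)
            (measure_ne_top _ _))),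
        ENNReal.toReal_mul, ENNReal.toReal_mul] at h2
      have h3 : q x + 2 * (mh * tailP μ x) ≤ convTail μ 2 x := by
        rw [convTail_two]
        simpa [hq, hmh, tailP] using h2
      rw [div_le_iff₀ (hpos x), sub_mul, div_mul_cancel₀ _ (ne_of_gt (hpos x))]
      linarith
    have hconvev : ∀ᶠ x in atTop, convTail μ 2 x / tailP μ x ≤ 2 + δ/2 :=
      hconv.eventually (eventually_le_nhds (by push_cast; linarith : (2:ℝ) < 2 + δ/2))
    have hqev : ∀ᶠ x in atTop, q x / tailP μ x ≤ δ := by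
      filter_upwards [hconvev, eventually_gt_atTop h] with x h1 h2
      have := hqb x h2
      have : q x / tailP μ x ≤ 2 + δ/2 - 2 * mh := by linarith
      have hmh1 : mh = 1 - tailP μ h := by linarith
      rw [hmh1] at this
      have hfh' : tailP μ h < δ/8 := hfh
      linarith
    -- decomposition
    have hdec : ∀ x, S x ≤ p₁ (x - h) + p₂ (x - h) +
        (P {ω | h < Y₁ ω ∧ h < Y₂ ω ∧ x < Y₁ ω + Y₂ ω}).toReal := by
      intro x
      have hsub : {ω | x < Y₁ ω + Y₂ ω} ⊆ {ω | x - h < Y₁ ω} ∪ ({ω | x - h < Y₂ ω} ∪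
          {ω | h < Y₁ ω ∧ h < Y₂ ω ∧ x < Y₁ ω + Y₂ ω}) := by
        intro ω hω
        simp only [Set.mem_setOf_eq, Set.mem_union] at *
        by_cases h1 : x - h < Y₁ ω
        · exact Or.inl h1
        by_cases h2 : x - h < Y₂ ω
        · exact Or.inr (Or.inl h2)
        · exact Or.inr (Or.inr ⟨by linarith, by linarith, hω⟩)
      have hPle := le_trans (measure_mono (μ := P) hsub)
        (le_trans (measure_union_le _ _) (add_le_add le_rfl (measure_union_le _ _)))
      exact toReal_le_add3 hPle (measure_ne_top _ _) (measure_ne_top _ _) (measure_ne_top _ _)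
    -- main tendsto
    have hshift : Tendsto (fun x : ℝ => x - h) atTop atTop := by
      simpa [sub_eq_add_neg] using tendsto_atTop_add_const_right atTop (-h) tendsto_id
    have hmain : Tendsto (fun x => (p₁ (x - h) / tailP μ (x - h) + p₂ (x - h) / tailP μ (x - h)) *
        (tailP μ (x - h) / tailP μ x)) atTop (nhds ((c₁ + c₂) * 1)) :=
      ((ht₁.comp hshift).add (ht₂.comp hshift)).mul (longtail hμ hh0)
    have hmainev : ∀ᶠ x in atTop, (p₁ (x - h) / tailP μ (x - h) + p₂ (x - h) / tailP μ (x - h)) *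
        (tailP μ (x - h) / tailP μ x) ≤ c₁ + c₂ + ε/2 :=
      hmain.eventually (eventually_le_nhds (by rw [mul_one]; linarith))
    -- combine
    filter_upwards [hqev, hmainev] with x hqx hmx
    have hd := hdec x
    have hbx := hbig x
    have hfx := hpos x
    have hfxh := hpos (x - h)
    have heq : (p₁ (x - h) + p₂ (x - h)) / tailP μ x =
        (p₁ (x - h) / tailP μ (x - h) + p₂ (x - h) / tailP μ (x - h)) *
        (tailP μ (x - h) / tailP μ x) := by
      field_simp
    have hT3 : (P {ω | h < Y₁ ω ∧ h < Y₂ ω ∧ x < Y₁ ω + Y₂ ω}).toReal / tailP μ x ≤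
        K₁ * K₂ * (q x / tailP μ x) := by
      exact le_trans (div_le_div_of_nonneg_right hbx hfx.le) (le_of_eq (mul_div_assoc _ _ _))
    calc S x / tailP μ x ≤ (p₁ (x - h) + p₂ (x - h) +
          (P {ω | h < Y₁ ω ∧ h < Y₂ ω ∧ x < Y₁ ω + Y₂ ω}).toReal) / tailP μ x :=
        div_le_div_of_nonneg_right hd hfx.le
      _ = (p₁ (x - h) + p₂ (x - h)) / tailP μ x +
          (P {ω | h < Y₁ ω ∧ h < Y₂ ω ∧ x < Y₁ ω + Y₂ ω}).toReal / tailP μ x := add_div _ _ _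
      _ ≤ (c₁ + c₂ + ε/2) + K₁ * K₂ * δ := by
          rw [heq]
          have : K₁ * K₂ * (q x / tailP μ x) ≤ K₁ * K₂ * δ :=
            mul_le_mul_of_nonneg_left hqx hKK.le
          linarith [hT3.trans this]
      _ ≤ c₁ + c₂ + ε := by
          have : K₁ * K₂ * δ = ε / 2 := by
            rw [hδdef]; field_simp
          linarith
  -- combine lower and upper into tendsto
  rw [Metric.tendsto_nhds]
  intro ε hε
  have hup := hupper (ε/2) (by linarith)
  have hlo : ∀ᶠ x in atTop, c₁ + c₂ - ε/2 ≤ S x / tailP μ x := by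
    have hev := hlowt.eventually (eventually_ge_nhds (by linarith : c₁ + c₂ - ε/2 < c₁ + c₂))
    filter_upwards [hev] with x h1
    exact le_trans h1 (hlowev x)
  filter_upwards [hup, hlo] with x h1 h2
  rw [Real.dist_eq, abs_lt]
  constructor <;> linarith

end main

lemma finset_sum_tendsto {μ : Measure ℝ} (hμ : Subexponential μ)
    {Ω : Type} [MeasurableSpace Ω] (P : Measure Ω) [IsProbabilityMeasure P]
    {n : ℕ} {X : Fin n → Ω → ℝ} {c : Fin n → ℝ}
    (hmeas : ∀ i, Measurable (X i)) (hnonneg : ∀ i ω, 0 ≤ X i ω)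
    (hindep : iIndepFun X P)
    (htail : ∀ i, Tendsto (fun x => (P {ω | x < X i ω}).toReal / tailP μ x) atTop (nhds (c i)))
    (s : Finset (Fin n)) :
    Tendsto (fun x => (P {ω | x < ∑ i ∈ s, X i ω}).toReal / tailP μ x) atTop
      (nhds (∑ i ∈ s, c i)) := by
  haveI : IsProbabilityMeasure μ := hμ.1
  classical
  induction s using Finset.induction_on with
  | empty =>
    simp only [Finset.sum_empty]
    apply Tendsto.congr' _ tendsto_const_nhds
    filter_upwards [eventually_ge_atTop (0:ℝ)] with x hx
    have he : {ω : Ω | x < 0} = ∅ := by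
      ext ω; simp only [Set.mem_setOf_eq, Set.mem_empty_iff_false, iff_false, not_lt]; linarith
    simp [he]
  | insert i s hnot ih =>
    have hInd : IndepFun (X i) (fun ω => ∑ j ∈ s, X j ω) P := by
      have := (hindep.indepFun_finsetSum_of_notMem hmeas hnot).symm
      have heq : (∑ j ∈ s, X j) = fun ω => ∑ j ∈ s, X j ω := by
        funext ω; simp [Finset.sum_apply]
      rwa [heq] at this
    have hmsum : Measurable (fun ω => ∑ j ∈ s, X j ω) := by
      exact Finset.measurable_sum s fun j _ => hmeas j
    have := two_var_tendsto hμ P (hm₁ := hmeas i) (hm₂ := hmsum)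
      (hn₁ := hnonneg i) (hn₂ := fun ω => Finset.sum_nonneg fun j _ => hnonneg j ω)
      hInd (htail i) ih
    rw [Finset.sum_insert hnot]
    refine this.congr fun x => ?_
    have hset : {ω : Ω | x < X i ω + ∑ j ∈ s, X j ω} = {ω : Ω | x < ∑ j ∈ insert i s, X j ω} := by
      ext ω; simp [Finset.sum_insert hnot]
    rw [hset]

lemma union_lower {Ω : Type} [MeasurableSpace Ω] (P : Measure Ω) [IsProbabilityMeasure P]
    {ι : Type*} [DecidableEq ι] (A : ι → Set Ω) (a : ι → ℝ)
    (hA : ∀ i, MeasurableSet (A i))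
    (ha : ∀ i, (P (A i)).toReal = a i)
    (hpair : ∀ i j, i ≠ j → (P (A i ∩ A j)).toReal ≤ a i * a j)
    (s : Finset ι) :
    (∑ i ∈ s, a i) - (∑ i ∈ s, a i)^2 ≤ (P (⋃ i ∈ s, A i)).toReal := by
  have hnn : ∀ j, 0 ≤ a j := fun j => (ha j) ▸ ENNReal.toReal_nonneg
  induction s using Finset.induction_on with
  | empty => simp
  | insert i s hnot ih =>
    have hU : MeasurableSet (⋃ j ∈ s, A j) := s.measurableSet_biUnion fun j _ => hA j
    have h1 := measure_union_add_inter (μ := P) (A i) hU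
    have h1' : (P (A i ∪ ⋃ j ∈ s, A j)).toReal =
        a i + (P (⋃ j ∈ s, A j)).toReal - (P (A i ∩ ⋃ j ∈ s, A j)).toReal := by
      have := congrArg ENNReal.toReal h1
      rw [ENNReal.toReal_add (measure_ne_top _ _) (measure_ne_top _ _),
        ENNReal.toReal_add (measure_ne_top _ _) (measure_ne_top _ _), ha i] at this
      linarith
    have h2 : (P (A i ∩ ⋃ j ∈ s, A j)).toReal ≤ a i * ∑ j ∈ s, a j := by
      have hi : A i ∩ ⋃ j ∈ s, A j = ⋃ j ∈ s, (A i ∩ A j) := by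
        rw [Set.inter_iUnion₂]
      rw [hi]
      calc (P (⋃ j ∈ s, A i ∩ A j)).toReal ≤ ∑ j ∈ s, (P (A i ∩ A j)).toReal := by
            have hle := measure_biUnion_finset_le (μ := P) s (fun j => A i ∩ A j)
            have := ENNReal.toReal_mono (by
              exact (ENNReal.sum_lt_top.mpr fun j _ => (measure_ne_top P _).lt_top).ne) hle
            rwa [ENNReal.toReal_sum (fun j _ => measure_ne_top _ _)] at this
        _ ≤ ∑ j ∈ s, a i * a j :=
            Finset.sum_le_sum fun j hj => hpair i j (fun hij => hnot (hij ▸ hj))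
        _ = a i * ∑ j ∈ s, a j := (Finset.mul_sum _ _ _).symm
    have hbu : ⋃ j ∈ insert i s, A j = A i ∪ ⋃ j ∈ s, A j := by
      simp [Set.biUnion_insert]
    rw [Finset.sum_insert hnot, hbu, h1']
    have hSa : 0 ≤ ∑ j ∈ s, a j := Finset.sum_nonneg fun j _ => hnn j
    nlinarith [ih, h2, hnn i, hSa]

/-- Lemma 1: independent nonnegative `Xᵢ` with `F̄ᵢ(x) ∼ cᵢ F̄(x)`,
`F` subexponential, `cᵢ ≥ 0`, `Σᵢ cᵢ > 0` imply
`P[X₁+⋯+Xₙ > x, Xᵢ ≤ x for all i] = o(F̄(x))` as `x → ∞`. -/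
theorem truncated_sum_littleO_of_tail_equiv
    {Ω : Type} [MeasurableSpace Ω] (P : Measure Ω) [IsProbabilityMeasure P]
    (μ : Measure ℝ) (hμ : Subexponential μ)
    (n : ℕ) (X : Fin n → Ω → ℝ) (c : Fin n → ℝ)
    (hmeas : ∀ i, Measurable (X i))
    (hnonneg : ∀ i ω, 0 ≤ X i ω)
    (hindep : iIndepFun X P)
    (hc : ∀ i, 0 ≤ c i) (hcpos : 0 < ∑ i, c i)
    (htail : ∀ i, Tendsto (fun x => (P {ω | x < X i ω}).toReal / tailP μ x)
        atTop (nhds (c i))) :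
    (fun x => (P {ω | x < ∑ i, X i ω ∧ ∀ i, X i ω ≤ x}).toReal)
      =o[atTop] fun x => tailP μ x := by
  haveI : IsProbabilityMeasure μ := hμ.1
  have hpos := hμ.2.2.1
  have hf0 : Tendsto (tailP μ) atTop (nhds 0) := tailP_tendsto_zero μ
  set T : ℝ → Set Ω := fun x => {ω | x < ∑ i, X i ω} with hT
  set U : ℝ → Set Ω := fun x => ⋃ i, {ω | x < X i ω} with hU
  have hUm : ∀ x, MeasurableSet (U x) :=
    fun x => MeasurableSet.iUnion fun i => measurableSet_lt measurable_const (hmeas i)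
  have hUT : ∀ x, U x ⊆ T x := by
    intro x
    refine Set.iUnion_subset fun i ω hω => ?_
    have h1 : X i ω ≤ ∑ j, X j ω :=
      Finset.single_le_sum (fun j _ => hnonneg j ω) (Finset.mem_univ i)
    exact lt_of_lt_of_le hω h1
  have hAeq : ∀ x, {ω | x < ∑ i, X i ω ∧ ∀ i, X i ω ≤ x} = T x \ U x := by
    intro x
    ext ω
    simp only [hT, hU, Set.mem_setOf_eq, Set.mem_diff, Set.mem_iUnion, not_exists, not_lt]
  have hratio : ∀ x, (P {ω | x < ∑ i, X i ω ∧ ∀ i, X i ω ≤ x}).toReal =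
      (P (T x)).toReal - (P (U x)).toReal := by
    intro x
    rw [hAeq x, measure_diff (hUT x) (hUm x).nullMeasurableSet (measure_ne_top _ _),
      ENNReal.toReal_sub_of_le (measure_mono (hUT x)) (measure_ne_top _ _)]
  set a : Fin n → ℝ → ℝ := fun i x => (P {ω | x < X i ω}).toReal with hadef
  have hRT : Tendsto (fun x => (P (T x)).toReal / tailP μ x) atTop (nhds (∑ i, c i)) := by
    have h := finset_sum_tendsto hμ P hmeas hnonneg hindep htail Finset.univ
    exact h
  have hai0 : ∀ i, Tendsto (fun x => a i x) atTop (nhds 0) := by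
    intro i
    have h := (htail i).mul hf0
    rw [mul_zero] at h
    exact h.congr fun x => div_mul_cancel₀ _ (ne_of_gt (hpos x))
  have hsum0 : Tendsto (fun x => ∑ i, a i x) atTop (nhds 0) := by
    have := tendsto_finset_sum Finset.univ (fun i _ => hai0 i)
    simpa using this
  have hsumr : Tendsto (fun x => (∑ i, a i x) / tailP μ x) atTop (nhds (∑ i, c i)) := by
    have := tendsto_finset_sum Finset.univ (fun i (_ : i ∈ Finset.univ) => htail i)
    refine this.congr fun x => ?_
    rw [← Finset.sum_div]
  have hUlow : ∀ x, (∑ i, a i x) - (∑ i, a i x)^2 ≤ (P (U x)).toReal := by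
    intro x
    have hpair : ∀ i j, i ≠ j →
        (P ({ω | x < X i ω} ∩ {ω | x < X j ω})).toReal ≤ a i x * a j x := by
      intro i j hij
      have hI : IndepFun (X i) (X j) P := hindep.indepFun hij
      have := hI.measure_inter_preimage_eq_mul (Set.Ioi x) (Set.Ioi x)
        measurableSet_Ioi measurableSet_Ioi
      have h2 : P ({ω | x < X i ω} ∩ {ω | x < X j ω}) =
          P {ω | x < X i ω} * P {ω | x < X j ω} := this
      rw [h2, ENNReal.toReal_mul]
    have h := union_lower P (fun i => {ω | x < X i ω}) (fun i => a i x)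
      (fun i => measurableSet_lt measurable_const (hmeas i)) (fun i => rfl) hpair Finset.univ
    have hbu : ⋃ i ∈ Finset.univ, {ω | x < X i ω} = U x := by
      simp [hU]
    rwa [hbu] at h
  have hsq : Tendsto (fun x => (∑ i, a i x)^2 / tailP μ x) atTop (nhds 0) := by
    have h := hsumr.mul hsum0
    rw [mul_zero] at h
    refine h.congr fun x => ?_
    rw [div_mul_eq_mul_div, ← pow_two]
  have hup : Tendsto (fun x => (P (T x)).toReal / tailP μ x -
      ((∑ i, a i x) / tailP μ x - (∑ i, a i x)^2 / tailP μ x)) atTop (nhds 0) := by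
    have h := hRT.sub (hsumr.sub hsq)
    simpa using h
  have hle : ∀ x, (P {ω | x < ∑ i, X i ω ∧ ∀ i, X i ω ≤ x}).toReal / tailP μ x ≤
      (P (T x)).toReal / tailP μ x -
      ((∑ i, a i x) / tailP μ x - (∑ i, a i x)^2 / tailP μ x) := by
    intro x
    rw [hratio x, ← sub_div, ← sub_div]
    refine div_le_div_of_nonneg_right ?_ (hpos x).le
    linarith [hUlow x]
  have h0 : ∀ x, 0 ≤ (P {ω | x < ∑ i, X i ω ∧ ∀ i, X i ω ≤ x}).toReal / tailP μ x :=
    fun x => div_nonneg ENNReal.toReal_nonneg (hpos x).le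
  have hsqueeze : Tendsto (fun x => (P {ω | x < ∑ i, X i ω ∧ ∀ i, X i ω ≤ x}).toReal / tailP μ x)
      atTop (nhds 0) :=
    tendsto_of_tendsto_of_tendsto_of_le_of_le tendsto_const_nhds hup h0 hle
  rw [isLittleO_iff_tendsto fun x hx => absurd hx (ne_of_gt (hpos x))]
  exact hsqueeze
end

section
/- Let N be a nonnegative-integer-valued random variable with everywhere-finite probability generating function (E[z^N] < ∞ for all complex z), independent of an i.i.d. sequence X₁, X₂, … with subexponential distribution F. Then lim_{x→∞} P[Σ_{i=1}^{N+1} Xᵢ > x, and Xᵢ ≤ x for all 1 ≤ i ≤ N+1] / (1-F(x)) = 0. -/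
open MeasureTheory ProbabilityTheory Filter Set Asymptotics
open scoped ENNReal
open scoped Classical

section Aux

noncomputable def CT (μ : Measure ℝ) (n : ℕ) (x : ℝ) : ℝ≥0∞ :=
  (Measure.pi fun _ : Fin n => μ) {y | x < ∑ i, y i}

noncomputable def Qe (μ : Measure ℝ) (m : ℕ) (x : ℝ) : ℝ≥0∞ :=
  (Measure.pi fun _ : Fin m => μ) {y | x < ∑ i, y i ∧ ∀ i, y i ≤ x}

lemma measSumGt (n : ℕ) (x : ℝ) : MeasurableSet {y : Fin n → ℝ | x < ∑ i, y i} :=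
  measurableSet_lt measurable_const (Finset.measurable_sum _ fun i _ => measurable_pi_apply i)

lemma measQset (m : ℕ) (x : ℝ) :
    MeasurableSet {y : Fin m → ℝ | x < ∑ i, y i ∧ ∀ i, y i ≤ x} :=
  by
  have : {y : Fin m → ℝ | x < ∑ i, y i ∧ ∀ i, y i ≤ x}
      = {y : Fin m → ℝ | x < ∑ i, y i} ∩ ⋂ i, {y | y i ≤ x} := by
    ext y; simp [Set.mem_iInter]
  rw [this]
  exact (measSumGt m x).inter (MeasurableSet.iInter fun i =>
    measurableSet_le (measurable_pi_apply i) measurable_const)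

variable {μ : Measure ℝ} [IsProbabilityMeasure μ]

lemma CT_le_one (n : ℕ) (x : ℝ) : CT μ n x ≤ 1 := prob_le_one

lemma CT_antitone (n : ℕ) : Antitone (CT μ n) := fun a b hab =>
  measure_mono (fun y hy => lt_of_le_of_lt hab hy)

lemma CT_meas (n : ℕ) : Measurable (CT μ n) := (CT_antitone n).measurable

lemma CT_rec (n : ℕ) (x : ℝ) : CT μ (n + 1) x = ∫⁻ y, CT μ n (x - y) ∂μ := by
  have hmp := measurePreserving_piFinSuccAbove (fun _ : Fin (n+1) => μ) 0
  set A : Set (ℝ × (Fin n → ℝ)) := {p | x < p.1 + ∑ i, p.2 i} with hA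
  have hAm : MeasurableSet A :=
    measurableSet_lt measurable_const
      (measurable_fst.add ((Finset.measurable_sum _ fun i _ =>
        (measurable_pi_apply i).comp measurable_snd)))
  have hpre : (MeasurableEquiv.piFinSuccAbove (fun _ : Fin (n+1) => ℝ) 0) ⁻¹' A
      = {y : Fin (n+1) → ℝ | x < ∑ i, y i} := by
    ext y
    simp only [Set.mem_preimage, hA, Set.mem_setOf_eq, MeasurableEquiv.piFinSuccAbove_apply,
      Fin.insertNthEquiv_symm_apply, Fin.removeNth]
    rw [Fin.sum_univ_succAbove (fun i => y i) 0]
  have := hmp.measure_preimage hAm.nullMeasurableSet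
  rw [hpre] at this
  rw [CT, this, Measure.prod_apply hAm]
  congr 1
  ext y
  congr 1
  ext z
  simp only [Set.mem_preimage, hA, Set.mem_setOf_eq, CT, Set.mem_setOf_eq]
  constructor
  · intro h; exact sub_lt_iff_lt_add'.mpr h
  · intro h; exact sub_lt_iff_lt_add'.mp h

lemma CT_one (z : ℝ) : CT μ 1 z = μ (Ioi z) := by
  have : {y : Fin 1 → ℝ | z < ∑ i, y i} = Set.pi Set.univ (fun _ : Fin 1 => Ioi z) := by
    ext y
    simp [Fin.forall_fin_one, Fin.sum_univ_one]
  rw [CT, this, Measure.pi_pi]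
  simp

lemma CT_zero (z : ℝ) : CT μ 0 z = if z < 0 then 1 else 0 := by
  rcases lt_or_ge z 0 with h | h
  · rw [if_pos h, CT]
    have : {y : Fin 0 → ℝ | z < ∑ i, y i} = Set.univ := by
      ext y; simp [h]
    rw [this]; exact measure_univ
  · rw [if_neg (not_lt.mpr h), CT]
    have : {y : Fin 0 → ℝ | z < ∑ i, y i} = ∅ := by
      ext y; simp [not_lt.mpr h]
    rw [this, measure_empty]

lemma convTail_eq (n : ℕ) (x : ℝ) : convTail μ n x = (CT μ n x).toReal := rfl

lemma tail_ne_zero (htail : ∀ x : ℝ, 0 < tailP μ x) (x : ℝ) : μ (Ioi x) ≠ 0 := by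
  intro h
  have := htail x
  rw [tailP, h] at this
  simp at this

lemma kesten (hsupp : μ (Set.Ioi 0) = 1) (htail : ∀ x : ℝ, 0 < tailP μ x)
    (hsub2 : Tendsto (fun x => convTail μ 2 x / tailP μ x) atTop (nhds 2)) :
    ∃ K : ℝ≥0∞, K ≠ ∞ ∧ ∀ n x, CT μ n x ≤ K * 4 ^ n * μ (Ioi x) := by
  -- choose T
  obtain ⟨T, hT⟩ : ∃ T : ℝ, ∀ x ≥ T, convTail μ 2 x ≤ 3 * tailP μ x := by
    have h3 : ∀ᶠ x in atTop, convTail μ 2 x / tailP μ x ≤ 3 :=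
      hsub2.eventually (eventually_le_nhds (by norm_num : (2:ℝ) < 3))
    rw [eventually_atTop] at h3
    obtain ⟨T, hT⟩ := h3
    exact ⟨T, fun x hx => (div_le_iff₀ (htail x)).mp (hT x hx)⟩
  have hT' : ∀ x ≥ T, CT μ 2 x ≤ 3 * μ (Ioi x) := by
    intro x hx
    have h1 : (CT μ 2 x).toReal ≤ (3 * μ (Ioi x)).toReal := by
      rw [ENNReal.toReal_mul]
      simpa [tailP, convTail_eq] using hT x hx
    exact (ENNReal.toReal_le_toReal (ne_of_lt (lt_of_le_of_lt (CT_le_one 2 x) (by norm_num)))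
      (ENNReal.mul_ne_top (by norm_num) (measure_ne_top μ _))).mp h1
  set K : ℝ≥0∞ := (μ (Ioi T))⁻¹ with hK
  have hTne : μ (Ioi T) ≠ 0 := tail_ne_zero htail T
  have hKtop : K ≠ ∞ := ENNReal.inv_ne_top.mpr hTne
  have hK1 : 1 ≤ K := by
    rw [hK, ENNReal.one_le_inv]
    exact prob_le_one
  have h4n : ∀ n : ℕ, (1:ℝ≥0∞) ≤ 4 ^ n := fun n => one_le_pow_of_one_le' (by norm_num) n
  have hKp : ∀ n : ℕ, (1:ℝ≥0∞) ≤ K * 4 ^ n := fun n =>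
    le_trans hK1 (le_mul_of_one_le_right' (h4n n))
  have hone : ∀ x : ℝ, x < 0 → μ (Ioi x) = 1 := by
    intro x hx
    refine le_antisymm prob_le_one ?_
    rw [← hsupp]
    exact measure_mono (Ioi_subset_Ioi hx.le)
  have hbig : ∀ x : ℝ, x < T → (1:ℝ≥0∞) ≤ K * μ (Ioi x) := by
    intro x hx
    rw [← ENNReal.inv_mul_cancel hTne (measure_ne_top μ _), hK]
    exact mul_le_mul_right (measure_mono (Ioi_subset_Ioi hx.le)) _
  refine ⟨K, hKtop, ?_⟩
  intro n
  induction n with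
  | zero =>
    intro x
    rw [CT_zero]
    split_ifs with h
    · have : μ (Ioi x) = 1 := hone x h
      rw [this, mul_one, pow_zero, mul_one]
      exact hK1
    · exact zero_le
  | succ n ih =>
    intro x
    rw [CT_rec]
    rcases lt_or_ge x T with hx | hx
    · calc ∫⁻ y, CT μ n (x - y) ∂μ ≤ ∫⁻ _, 1 ∂μ := lintegral_mono fun y => CT_le_one n _
        _ = 1 := by simp
        _ ≤ K * μ (Ioi x) := hbig x hx
        _ ≤ K * 4 ^ (n+1) * μ (Ioi x) := by
            refine mul_le_mul_left ?_ _
            exact le_mul_of_one_le_right' (h4n (n+1))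
    · have hsplit : ∫⁻ y, CT μ n (x - y) ∂μ
          = (∫⁻ y in Iic x, CT μ n (x - y) ∂μ) + ∫⁻ y in (Iic x)ᶜ, CT μ n (x - y) ∂μ :=
        (lintegral_add_compl _ measurableSet_Iic).symm
      have h2 : ∫⁻ y in (Iic x)ᶜ, CT μ n (x - y) ∂μ ≤ μ (Ioi x) := by
        calc ∫⁻ y in (Iic x)ᶜ, CT μ n (x - y) ∂μ ≤ ∫⁻ _ in (Iic x)ᶜ, 1 ∂μ :=
              lintegral_mono fun y => CT_le_one n _
          _ = μ ((Iic x)ᶜ) := by simp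
          _ = μ (Ioi x) := by rw [compl_Iic]
      have h1 : ∫⁻ y in Iic x, CT μ n (x - y) ∂μ ≤ K * 4 ^ n * (3 * μ (Ioi x)) := by
        calc ∫⁻ y in Iic x, CT μ n (x - y) ∂μ
            ≤ ∫⁻ y in Iic x, K * 4 ^ n * μ (Ioi (x - y)) ∂μ := lintegral_mono fun y => ih _
          _ = K * 4 ^ n * ∫⁻ y in Iic x, μ (Ioi (x - y)) ∂μ := by
              rw [lintegral_const_mul]
              have h0 : (fun y : ℝ => μ (Ioi (x - y))) = (CT μ 1) ∘ (fun y : ℝ => x - y) := by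
                funext y; rw [Function.comp_apply, CT_one]
              rw [h0]
              exact (CT_meas 1).comp (measurable_const.sub measurable_id)
          _ ≤ K * 4 ^ n * CT μ 2 x := by
              refine mul_le_mul_right ?_ _
              calc ∫⁻ y in Iic x, μ (Ioi (x - y)) ∂μ ≤ ∫⁻ y, μ (Ioi (x - y)) ∂μ :=
                    setLIntegral_le_lintegral _ _
                _ = CT μ 2 x := by
                    rw [CT_rec 1]
                    congr 1
                    funext y
                    rw [CT_one]
          _ ≤ K * 4 ^ n * (3 * μ (Ioi x)) := mul_le_mul_right (hT' x hx) _
      calc ∫⁻ y, CT μ n (x - y) ∂μ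
          ≤ K * 4 ^ n * (3 * μ (Ioi x)) + μ (Ioi x) := by rw [hsplit]; exact add_le_add h1 h2
        _ ≤ K * 4 ^ n * (3 * μ (Ioi x)) + K * 4 ^ n * μ (Ioi x) := by
            refine add_le_add_right ?_ _
            exact le_mul_of_one_le_left' (hKp n)
        _ = K * 4 ^ (n+1) * μ (Ioi x) := by ring

lemma Iic_zero_null (hsupp : μ (Set.Ioi 0) = 1) : μ (Iic 0) = 0 := by
  have := prob_compl_eq_one_sub (μ := μ) measurableSet_Ioi (s := Ioi (0:ℝ))
  rw [hsupp, compl_Ioi] at this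
  simpa using this

lemma CT_eq_Qe_add (hsupp : μ (Set.Ioi 0) = 1) (m : ℕ) (x : ℝ) :
    CT μ m x = Qe μ m x + (1 - μ (Iic x) ^ m) := by
  set π := Measure.pi (fun _ : Fin m => μ) with hπ
  haveI : IsProbabilityMeasure π := by rw [hπ]; infer_instance
  set S : Set (Fin m → ℝ) := {y | x < ∑ i, y i} with hS
  set B : Set (Fin m → ℝ) := ⋃ i, (fun y => y i) ⁻¹' (Ioi x) with hB
  have hBm : MeasurableSet B :=
    MeasurableSet.iUnion fun i => (measurable_pi_apply i) measurableSet_Ioi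
  have hBc : Bᶜ = Set.pi univ (fun _ : Fin m => Iic x) := by
    ext y
    simp only [hB, Set.mem_compl_iff, Set.mem_iUnion, Set.mem_preimage, Set.mem_Ioi,
      not_exists, not_lt, Set.mem_pi, Set.mem_univ, Set.mem_Iic, true_implies]
  -- null set of nonpositive coordinates
  have hN : π (⋃ i : Fin m, (fun y => y i) ⁻¹' (Iic 0)) = 0 := by
    refine measure_iUnion_null fun i => ?_
    exact Measure.pi_eval_preimage_null _ (Iic_zero_null hsupp)
  -- B \ S is null
  have hBS : π (B \ S) = 0 := by
    refine measure_mono_null ?_ hN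
    intro y hy
    obtain ⟨hyB, hyS⟩ := hy
    by_contra hc
    simp only [Set.mem_iUnion, Set.mem_preimage, Set.mem_Iic, not_exists, not_le] at hc
    obtain ⟨i, hi⟩ : ∃ i, x < y i := by
      simpa [hB, Set.mem_iUnion] using hyB
    refine hyS ?_
    have : y i ≤ ∑ j, y j := Finset.single_le_sum (fun j _ => (hc j).le) (Finset.mem_univ i)
    exact lt_of_lt_of_le hi this
  have hSB : π (S ∩ B) = π B := by
    have h1 : π B = π (B ∩ S) + π (B \ S) := (measure_inter_add_diff B (measurableSet_lt
    measurable_const (Finset.measurable_sum _ fun i _ => measurable_pi_apply i))).symm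
    rw [hBS, add_zero] at h1
    rw [Set.inter_comm]
    exact h1.symm
  have hsplit : π S = π (S ∩ Bᶜ) + π (S ∩ B) := by
    have h := measure_inter_add_diff (μ := π) S hBm
    rw [Set.diff_eq] at h
    rw [← h, add_comm]
  have hQs : S ∩ Bᶜ = {y : Fin m → ℝ | x < ∑ i, y i ∧ ∀ i, y i ≤ x} := by
    ext y
    simp only [hS, hBc, Set.mem_inter_iff, Set.mem_setOf_eq, Set.mem_pi, Set.mem_univ,
      Set.mem_Iic, true_implies]
  have hpiB : π B = 1 - μ (Iic x) ^ m := by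
    have hc : π Bᶜ = μ (Iic x) ^ m := by
      rw [hBc, hπ, Measure.pi_pi]
      simp [Finset.prod_const]
    have := prob_compl_eq_one_sub (μ := π) hBm.compl (s := Bᶜ)
    rw [compl_compl, hc] at this
    exact this
  rw [CT, ← hπ, ← hS, hsplit, hQs, hSB, hpiB]
  rfl

lemma Qe_le_one (m : ℕ) (x : ℝ) : Qe μ m x ≤ 1 := prob_le_one

lemma tendsto_Iic_toReal : Tendsto (fun x => (μ (Iic x)).toReal) atTop (nhds 1) := by
  have h := tendsto_measure_Iic_atTop (μ := μ)
  rw [measure_univ] at h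
  have := (ENNReal.tendsto_toReal (by norm_num : (1:ℝ≥0∞) ≠ ∞)).comp h
  simpa [Function.comp_def] using this

lemma tendsto_Qratio (hsupp : μ (Set.Ioi 0) = 1) (htail : ∀ x : ℝ, 0 < tailP μ x)
    (hsub : ∀ n : ℕ, 2 ≤ n →
      Tendsto (fun x => convTail μ n x / tailP μ x) atTop (nhds (n : ℝ)))
    (m : ℕ) (hm : 1 ≤ m) :
    Tendsto (fun x => (Qe μ m x).toReal / tailP μ x) atTop (nhds 0) := by
  rcases eq_or_lt_of_le hm with h1 | h2
  · -- m = 1 : the set is empty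
    have : ∀ x : ℝ, Qe μ m x = 0 := by
      intro x
      rw [Qe]
      convert measure_empty
      · ext y
        subst h1
        simp only [Set.mem_setOf_eq, Set.mem_empty_iff_false, iff_false, not_and, not_forall]
        intro hlt
        refine ⟨0, ?_⟩
        rw [Fin.sum_univ_one] at hlt
        exact not_le.mpr hlt
      · infer_instance
    simp only [this, ENNReal.toReal_zero, zero_div]
    exact tendsto_const_nhds
  · have hm2 : 2 ≤ m := h2
    have hfun : ∀ x : ℝ, (Qe μ m x).toReal / tailP μ x
        = convTail μ m x / tailP μ x - ∑ k ∈ Finset.range m, ((μ (Iic x)).toReal) ^ k := by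
      intro x
      set Fr : ℝ := (μ (Iic x)).toReal with hFr
      have hFle : μ (Iic x) ^ m ≤ 1 := by
        calc μ (Iic x) ^ m ≤ 1 ^ m := pow_le_pow_left' prob_le_one m
          _ = 1 := one_pow m
      have hadd : (CT μ m x).toReal = (Qe μ m x).toReal + (1 - μ (Iic x) ^ m).toReal := by
        rw [CT_eq_Qe_add hsupp m x]
        refine ENNReal.toReal_add ?_ ?_
        · exact ne_of_lt (lt_of_le_of_lt (Qe_le_one m x) (by norm_num))
        · exact ne_of_lt (lt_of_le_of_lt (tsub_le_self) (by norm_num))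
      have hsub' : (1 - μ (Iic x) ^ m).toReal = 1 - Fr ^ m := by
        rw [ENNReal.toReal_sub_of_le hFle (by norm_num), ENNReal.toReal_pow, ENNReal.toReal_one]
      have htp : Fr + tailP μ x = 1 := by
        have h0 : μ (Iic x) + μ (Ioi x) = 1 := by
          have := measure_add_measure_compl (μ := μ) (measurableSet_Iic (a := x))
          rwa [compl_Iic, measure_univ] at this
        have := congrArg ENNReal.toReal h0
        rwa [ENNReal.toReal_add (measure_ne_top μ _) (measure_ne_top μ _),
          ENNReal.toReal_one] at this
      have hgeom : 1 - Fr ^ m = tailP μ x * ∑ k ∈ Finset.range m, Fr ^ k := by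
        have hg := geom_sum_mul Fr m
        have h1F : tailP μ x = 1 - Fr := by linarith
        rw [h1F]
        nlinarith [hg]
      have hQr : (Qe μ m x).toReal
          = convTail μ m x - tailP μ x * ∑ k ∈ Finset.range m, Fr ^ k := by
        have : convTail μ m x = (Qe μ m x).toReal + (1 - Fr ^ m) := by
          rw [convTail, ← hsub']; exact hadd
        rw [this, hgeom]; ring
      rw [hQr, sub_div, mul_div_cancel_left₀ _ (ne_of_gt (htail x))]
    have hsum : Tendsto (fun x => ∑ k ∈ Finset.range m, ((μ (Iic x)).toReal) ^ k)
        atTop (nhds (m : ℝ)) := by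
      have h := tendsto_finset_sum (Finset.range m)
        (fun k _ => (tendsto_Iic_toReal (μ := μ)).pow k)
      simpa using h
    have hfin := (hsub m hm2).sub hsum
    rw [sub_self] at hfin
    exact Tendsto.congr (fun x => (hfun x).symm) hfin


end Aux

lemma law_pi {Ω : Type} [MeasurableSpace Ω] (P : Measure Ω)
    (μ : Measure ℝ) [IsProbabilityMeasure μ]
    (X : ℕ → Ω → ℝ) (hmeas : ∀ i, Measurable (X i))
    (hindep : iIndepFun X P)
    (hlaw : ∀ i, Measure.map (X i) P = μ) (m : ℕ) :
    Measure.map (fun ω (i : Fin m) => X i ω) P = Measure.pi fun _ : Fin m => μ := by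
  have hV : Measurable (fun ω (i : Fin m) => X i ω) :=
    measurable_pi_lambda _ fun i => hmeas i
  refine (Measure.pi_eq fun s hs => ?_).symm
  rw [Measure.map_apply hV (MeasurableSet.univ_pi hs)]
  set sets : ℕ → Set ℝ := fun i => if h : i < m then s ⟨i, h⟩ else univ with hsets
  have hseq : (fun ω (i : Fin m) => X i ω) ⁻¹' (Set.pi univ s)
      = ⋂ i ∈ Finset.range m, X i ⁻¹' sets i := by
    ext ω
    simp only [Set.mem_preimage, Set.mem_pi, Set.mem_univ, true_implies, Set.mem_iInter,
      Finset.mem_range]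
    constructor
    · intro h i hi
      simp only [hsets, dif_pos hi]
      exact h ⟨i, hi⟩
    · intro h i
      have := h i i.isLt
      simpa only [hsets, dif_pos i.isLt] using this
  rw [hseq, hindep.measure_inter_preimage_eq_mul (Finset.range m) (fun i hi => by
      by_cases h : i < m
      · simp only [hsets, dif_pos h]; exact hs _
      · simp only [hsets, dif_neg h]; exact MeasurableSet.univ)]
  rw [← Fin.prod_univ_eq_prod_range (fun i => P (X i ⁻¹' sets i)) m]
  refine Finset.prod_congr rfl fun i _ => ?_
  have h : sets (i : ℕ) = s i := by
    simp only [hsets, dif_pos i.isLt, Fin.eta]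
  rw [h, ← hlaw (i : ℕ), Measure.map_apply (hmeas _) (hs i)]

lemma mixture {Ω : Type} [MeasurableSpace Ω] (P : Measure Ω) [IsProbabilityMeasure P]
    (μ : Measure ℝ) [IsProbabilityMeasure μ] (N : Ω → ℕ) (hNmeas : Measurable N)
    (X : ℕ → Ω → ℝ) (hmeas : ∀ i, Measurable (X i))
    (hindep : iIndepFun X P)
    (hlaw : ∀ i, Measure.map (X i) P = μ)
    (hNindep : IndepFun N (fun ω => fun i => X i ω) P) (x : ℝ) :
    P {ω | x < ∑ i ∈ Finset.range (N ω + 1), X i ω ∧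
        ∀ i ∈ Finset.range (N ω + 1), X i ω ≤ x}
      = ∑' n : ℕ, P (N ⁻¹' {n}) * Qe μ (n + 1) x := by
  set V : Ω → (ℕ → ℝ) := fun ω i => X i ω with hV
  have hVmeas : Measurable V := measurable_pi_lambda _ fun i => hmeas i
  set A : ∀ n : ℕ, Set (Fin (n + 1) → ℝ) :=
    fun n => {y | x < ∑ i, y i ∧ ∀ i, y i ≤ x} with hA
  set res : ∀ n : ℕ, (ℕ → ℝ) → (Fin (n + 1) → ℝ) :=
    fun n f i => f i with hres
  have hresm : ∀ n, Measurable (res n) :=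
    fun n => measurable_pi_lambda _ fun i => measurable_pi_apply _
  set Atil : ∀ n : ℕ, Set (ℕ → ℝ) := fun n => res n ⁻¹' A n with hAtil
  have hAtilm : ∀ n, MeasurableSet (Atil n) := fun n => (hresm n) (measQset (n + 1) x)
  have hE : {ω | x < ∑ i ∈ Finset.range (N ω + 1), X i ω ∧
        ∀ i ∈ Finset.range (N ω + 1), X i ω ≤ x}
      = ⋃ n, (N ⁻¹' {n} ∩ V ⁻¹' Atil n) := by
    ext ω
    simp only [Set.mem_setOf_eq, Set.mem_iUnion, Set.mem_inter_iff, Set.mem_preimage,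
      Set.mem_singleton_iff, hAtil, hA, hres, hV, Finset.mem_range]
    constructor
    · intro ⟨h1, h2⟩
      refine ⟨N ω, rfl, ?_, ?_⟩
      · rwa [Fin.sum_univ_eq_sum_range (fun i => X i ω) (N ω + 1)]
      · exact fun i => h2 i i.isLt
    · rintro ⟨n, hn, h1, h2⟩
      rw [hn]
      constructor
      · rwa [Fin.sum_univ_eq_sum_range (fun i => X i ω) (n + 1)] at h1
      · intro i hi
        exact h2 ⟨i, hi⟩
  rw [hE, measure_iUnion ?_ ?_]
  · congr 1
    funext n
    have h1 : P (N ⁻¹' {n} ∩ V ⁻¹' Atil n) = P (N ⁻¹' {n}) * P (V ⁻¹' Atil n) :=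
      hNindep.measure_inter_preimage_eq_mul _ _ (measurableSet_singleton n) (hAtilm n)
    rw [h1]
    congr 1
    have h2 : V ⁻¹' Atil n = (fun ω (i : Fin (n + 1)) => X i ω) ⁻¹' A n := rfl
    rw [h2, ← Measure.map_apply (f := fun ω (i : Fin (n + 1)) => X (i : ℕ) ω)
      (measurable_pi_lambda _ fun i => hmeas _) (measQset (n + 1) x),
      law_pi P μ X hmeas hindep hlaw (n + 1)]
    rfl
  · intro a b hab
    simp only [Function.onFun]
    refine Set.disjoint_left.mpr ?_
    rintro ω ⟨ha, _⟩ ⟨hb, _⟩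
    exact hab (by rw [← ha, ← hb] <;> rfl)
  · exact fun n => (hNmeas (measurableSet_singleton n)).inter (hVmeas (hAtilm n))

lemma pgf_summable {Ω : Type} [MeasurableSpace Ω] (P : Measure Ω) [IsProbabilityMeasure P]
    (N : Ω → ℕ) (hNmeas : Measurable N)
    (hpgf : ∀ z : ℂ, Integrable (fun ω => z ^ N ω) P) :
    Summable (fun n => (P (N ⁻¹' {n})).toReal * 4 ^ n) := by
  have hint : Integrable (fun ω => (8:ℝ) ^ N ω) P := by
    have h := (hpgf ((8:ℝ):ℂ)).norm
    refine h.congr (Filter.Eventually.of_forall fun ω => ?_)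
    show ‖((8:ℝ):ℂ) ^ N ω‖ = (8:ℝ) ^ N ω
    rw [norm_pow, Complex.norm_real]
    norm_num
  set C := ∫ ω, (8:ℝ) ^ N ω ∂P with hC
  have hbound : ∀ n, (P (N ⁻¹' {n})).toReal * 8 ^ n ≤ C := by
    intro n
    have hmeasset : MeasurableSet (N ⁻¹' {n}) := hNmeas (measurableSet_singleton n)
    have h1 : ∫ ω in N ⁻¹' {n}, (8:ℝ) ^ N ω ∂P = (P (N ⁻¹' {n})).toReal * 8 ^ n := by
      have heq : Set.EqOn (fun ω => (8:ℝ) ^ N ω) (fun _ => (8:ℝ) ^ n) (N ⁻¹' {n}) := by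
        intro ω hω
        simp only [Set.mem_preimage, Set.mem_singleton_iff] at hω
        simp [hω]
      rw [setIntegral_congr_fun hmeasset heq, setIntegral_const, smul_eq_mul]; rfl
    rw [← h1]
    exact setIntegral_le_integral hint (Filter.Eventually.of_forall fun ω => by positivity)
  refine Summable.of_nonneg_of_le (fun n => by positivity) (fun n => ?_)
    ((summable_geometric_of_lt_one (r := (1/2:ℝ)) (by norm_num) (by norm_num)).mul_left C)
  have h8 : (P (N ⁻¹' {n})).toReal * 8 ^ n ≤ C := hbound n
  have h4 : (4:ℝ) ^ n = 8 ^ n * (1/2) ^ n := by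
    rw [← mul_pow]; norm_num
  rw [h4, ← mul_assoc]
  exact mul_le_mul_of_nonneg_right h8 (by positivity)


/-- if `N` has an everywhere-finite probability generating function and is
independent of an i.i.d. subexponential sequence `X₁, X₂, …`, then
`P[Σ_{i=1}^{N+1} Xᵢ > x, Xᵢ ≤ x for all i ≤ N+1] / (1-F(x)) → 0` as `x → ∞`. -/
theorem random_truncated_sum_littleO
    {Ω : Type} [MeasurableSpace Ω] (P : Measure Ω) [IsProbabilityMeasure P]
    (μ : Measure ℝ) (hμ : Subexponential μ)
    (N : Ω → ℕ) (hNmeas : Measurable N)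
    (hpgf : ∀ z : ℂ, Integrable (fun ω => z ^ N ω) P)
    (X : ℕ → Ω → ℝ) (hmeas : ∀ i, Measurable (X i))
    (hindep : iIndepFun X P)
    (hlaw : ∀ i, Measure.map (X i) P = μ)
    (hNindep : IndepFun N (fun ω => fun i => X i ω) P) :
    Tendsto (fun x =>
        (P {ω | x < ∑ i ∈ Finset.range (N ω + 1), X i ω ∧
              ∀ i ∈ Finset.range (N ω + 1), X i ω ≤ x}).toReal / tailP μ x)
      atTop (nhds 0) := by
  obtain ⟨hprob, hsupp, htail, hsub⟩ := hμ
  haveI := hprob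
  obtain ⟨K, hKtop, hK⟩ := kesten hsupp htail (by
    have := hsub 2 le_rfl
    norm_num at this
    exact this)
  set p : ℕ → ℝ≥0∞ := fun n => P (N ⁻¹' {n}) with hp
  have hQtop : ∀ n x, Qe μ (n + 1) x ≠ ∞ :=
    fun n x => ne_top_of_le_ne_top (by norm_num) (Qe_le_one (n + 1) x)
  have hfun : ∀ x : ℝ, (P {ω | x < ∑ i ∈ Finset.range (N ω + 1), X i ω ∧
        ∀ i ∈ Finset.range (N ω + 1), X i ω ≤ x}).toReal / tailP μ x
      = ∑' n : ℕ, ((p n * Qe μ (n + 1) x).toReal / tailP μ x) := by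
    intro x
    rw [mixture P μ N hNmeas X hmeas hindep hlaw hNindep x,
      ENNReal.tsum_toReal_eq (fun n => ENNReal.mul_ne_top (measure_ne_top P _) (hQtop n x)),
      tsum_div_const]
  have hsummable := pgf_summable P N hNmeas hpgf
  have hb : Summable (fun n => (p n).toReal * (K.toReal * 4 ^ (n + 1))) := by
    refine Summable.congr (f := fun n => (K.toReal * 4) * ((p n).toReal * 4 ^ n))
      (hsummable.mul_left (K.toReal * 4)) (fun n => ?_)
    ring
  have h0 : (0:ℝ) = ∑' _ : ℕ, (0:ℝ) := by rw [tsum_zero]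
  rw [h0]
  refine Tendsto.congr (fun x => (hfun x).symm) ?_
  refine tendsto_tsum_of_dominated_convergence hb (fun n => ?_) ?_
  · have hq := tendsto_Qratio hsupp htail hsub (n + 1) (Nat.le_add_left 1 n)
    have h := hq.const_mul ((p n).toReal)
    rw [mul_zero] at h
    refine Tendsto.congr (fun x => ?_) h
    rw [ENNReal.toReal_mul, mul_div_assoc]
  · refine Filter.Eventually.of_forall (fun x n => ?_)
    have htx := htail x
    rw [Real.norm_eq_abs, abs_of_nonneg (div_nonneg ENNReal.toReal_nonneg htx.le)]
    rw [div_le_iff₀ htx]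
    have h1 : Qe μ (n + 1) x ≤ K * 4 ^ (n + 1) * μ (Ioi x) :=
      le_trans (measure_mono fun y hy => hy.1) (hK (n + 1) x)
    have hfin : K * 4 ^ (n + 1) * μ (Ioi x) ≠ ∞ :=
      ENNReal.mul_ne_top (ENNReal.mul_ne_top hKtop (ENNReal.pow_ne_top (by norm_num)))
        (measure_ne_top μ _)
    have h2 : (Qe μ (n + 1) x).toReal ≤ (K * 4 ^ (n + 1) * μ (Ioi x)).toReal :=
      ENNReal.toReal_mono hfin h1
    rw [ENNReal.toReal_mul]
    calc (p n).toReal * (Qe μ (n + 1) x).toReal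
        ≤ (p n).toReal * (K * 4 ^ (n + 1) * μ (Ioi x)).toReal :=
          mul_le_mul_of_nonneg_left h2 ENNReal.toReal_nonneg
      _ = (p n).toReal * (K.toReal * 4 ^ (n + 1)) * tailP μ x := by
          rw [ENNReal.toReal_mul, ENNReal.toReal_mul, ENNReal.toReal_pow, ENNReal.toReal_ofNat]
          rw [tailP]
          ring
end

section
/- In the advance-reservation loss network, the engaged capacity at any time is bounded above, pathwise, by the engaged capacity in an infinite-capacity system without advance reservations in which the holding time of request n is Dₙ + θₙ and only requests with Bₙ ≤ C are admitted. Consequently the blocking probability is at most P[Σ_{i∈𝒩_{s,n}^{(C)}(θ+D)} Bᵢ + Bₙ > C]. -/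
open MeasureTheory ProbabilityTheory Filter Set Asymptotics
open scoped Classical

/-- in the advance-reservation loss network, the engaged capacity at any time
is bounded pathwise by the engaged capacity of an infinite-capacity system without advance
reservations in which request `n` holds for `Dₙ + θₙ` and only requests with `Bₙ ≤ C` are
admitted; consequently the blocking probability is at most
`P[Σ_{i∈𝒩_{s,n}^{(C)}(θ+D)} Bᵢ + Bₙ > C]`. -/
theorem advance_reservation_comparison_bound
    {Ω : Type} [MeasurableSpace Ω] (P : Measure Ω) [IsProbabilityMeasure P]
    (μ : Measure ℝ) [IsProbabilityMeasure μ] (hsupp : μ (Set.Ioi 0) = 1)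
    (τ B θ D : ℕ → Ω → ℝ)
    (hτmeas : ∀ n, Measurable (τ n)) (hBmeas : ∀ n, Measurable (B n))
    (hθmeas : ∀ n, Measurable (θ n)) (hDmeas : ∀ n, Measurable (D n))
    (hτpos : ∀ n ω, τ n ω < τ (n + 1) ω)
    (hBlaw : ∀ n, Measure.map (B n) P = μ)
    (hθnonneg : ∀ n ω, 0 ≤ θ n ω) (hDnonneg : ∀ n ω, 0 ≤ D n ω)
    -- advance-reservation loss dynamics:
    (A : ℝ → ℕ → Ω → Prop)
    (hAmeas : ∀ C n, MeasurableSet {ω | A C n ω})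
    (hA : ∀ C n ω, A C n ω ↔ ∀ t : ℝ,
        τ n ω + D n ω < t → t < τ n ω + D n ω + θ n ω →
          (∑ i ∈ Finset.range n,
              if A C i ω ∧ τ i ω + D i ω < t ∧ t < τ i ω + D i ω + θ i ω
              then B i ω else 0) + B n ω ≤ C) :
    -- (a) pathwise bound on the engaged capacity at any time `t`:
    (∀ (C : ℝ) (n : ℕ) (t : ℝ), ∀ᵐ ω ∂P,
      (∑ i ∈ Finset.range n,
          if A C i ω ∧ τ i ω + D i ω < t ∧ t < τ i ω + D i ω + θ i ω
          then B i ω else 0)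
        ≤ ∑ i ∈ Finset.range n,
            if B i ω ≤ C ∧ τ i ω ≤ t ∧ t < τ i ω + D i ω + θ i ω
            then B i ω else 0) ∧
    -- (b) bound on the blocking probability:
    (∀ (C : ℝ) (n : ℕ),
      P {ω | ¬ A C n ω}
        ≤ P {ω | C < (∑ i ∈ Finset.range n,
              if B i ω ≤ C ∧ τ n ω - τ i ω < θ i ω + D i ω then B i ω else 0)
            + B n ω}) := by
  have hBpos : ∀ i : ℕ, ∀ᵐ ω ∂P, 0 < B i ω := by
    intro i
    have h1 : P (B i ⁻¹' Set.Ioi 0) = 1 := by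
      rw [← Measure.map_apply (hBmeas i) measurableSet_Ioi, hBlaw i, hsupp]
    have h0 : P (B i ⁻¹' Set.Ioi 0)ᶜ = 0 := by
      rw [measure_compl ((measurableSet_Ioi).preimage (hBmeas i)) (measure_ne_top _ _), h1,
        measure_univ, tsub_self]
    rw [ae_iff]
    have heq : {a | ¬ 0 < B i a} = (B i ⁻¹' Set.Ioi 0)ᶜ := by
      ext ω; simp
    rw [heq]; exact h0
  have hGae : ∀ᵐ ω ∂P, ∀ i, 0 < B i ω := ae_all_iff.mpr hBpos
  have key : ∀ (C : ℝ) (i : ℕ) (t : ℝ) (ω : Ω), (∀ j, 0 < B j ω) → A C i ω →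
      τ i ω + D i ω < t → t < τ i ω + D i ω + θ i ω → B i ω ≤ C := by
    intro C i t ω hG hAi ht1 ht2
    have h := (hA C i ω).mp hAi t ht1 ht2
    have hS : 0 ≤ ∑ j ∈ Finset.range i,
        if A C j ω ∧ τ j ω + D j ω < t ∧ t < τ j ω + D j ω + θ j ω then B j ω else 0 := by
      refine Finset.sum_nonneg fun j _ => ?_
      split
      · exact (hG j).le
      · exact le_refl 0
    linarith
  constructor
  · intro C n t
    filter_upwards [hGae] with ω hG
    refine Finset.sum_le_sum fun i _ => ?_
    split_ifs with h1 h2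
    · exact le_refl _
    · exact absurd ⟨key C i t ω hG h1.1 h1.2.1 h1.2.2,
        le_of_lt (lt_of_le_of_lt (le_add_of_nonneg_right (hDnonneg i ω)) h1.2.1),
        h1.2.2⟩ h2
    · exact (hG i).le
    · exact le_refl 0
  · intro C n
    set T : Set Ω := {ω | C < (∑ i ∈ Finset.range n,
        if B i ω ≤ C ∧ τ n ω - τ i ω < θ i ω + D i ω then B i ω else 0) + B n ω} with hT
    set G : Set Ω := {ω | ∀ i, 0 < B i ω} with hGdef
    have hGc : P Gᶜ = 0 := by
      rw [hGdef, Set.compl_setOf]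
      exact ae_iff.mp hGae
    have hsub : {ω | ¬ A C n ω} ∩ G ⊆ T := by
      rintro ω ⟨hnA, hG⟩
      by_contra hle
      simp only [hT, Set.mem_setOf_eq, not_lt] at hle
      apply hnA
      rw [hA]
      intro t ht1 ht2
      refine le_trans (add_le_add ?_ le_rfl) hle
      refine Finset.sum_le_sum fun i _ => ?_
      split_ifs with h1 h2
      · exact le_refl _
      · refine absurd ⟨key C i t ω hG h1.1 h1.2.1 h1.2.2, ?_⟩ h2
        have := hDnonneg n ω
        have := h1.2.2
        linarith
      · exact (hG i).le
      · exact le_refl 0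
    calc P {ω | ¬ A C n ω} ≤ P (({ω | ¬ A C n ω} ∩ G) ∪ Gᶜ) := by
          refine measure_mono fun ω hω => ?_
          by_cases hg : ω ∈ G
          · exact Or.inl ⟨hω, hg⟩
          · exact Or.inr hg
      _ ≤ P ({ω | ¬ A C n ω} ∩ G) + P Gᶜ := measure_union_le _ _
      _ = P ({ω | ¬ A C n ω} ∩ G) := by rw [hGc, add_zero]
      _ ≤ P T := measure_mono hsub
end

section
/- Let X₁,…,Xₘ be independent nonnegative random variables where X₁,…,X_k have subexponential distribution F and X_{k+1},…,Xₘ are each stochastically dominated by Y₁+⋯+Y_H for i.i.d. Yⱼ ∼ F (H a fixed integer). Then for every ε > 0 there exists K_ε < ∞ (depending only on ε, F, H) such that P[X₁+⋯+Xₘ > x] ≤ K_ε (1+ε)^m (1-F(x)) for all x ≥ 0 and all m, k. -/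
open MeasureTheory ProbabilityTheory Filter Set Asymptotics
open scoped Classical
open scoped ENNReal

namespace KestenAux

noncomputable def sconv (μ : Measure ℝ) (n : ℕ) : Measure ℝ :=
  Measure.map (fun y : Fin n → ℝ => ∑ i, y i) (Measure.pi fun _ : Fin n => μ)

noncomputable def mconv (ρ σ : Measure ℝ) : Measure ℝ :=
  Measure.map (fun p : ℝ × ℝ => p.1 + p.2) (ρ.prod σ)

lemma measurable_finSum (n : ℕ) : Measurable fun y : Fin n → ℝ => ∑ i, y i :=
  Finset.measurable_sum _ (fun i _ => measurable_pi_apply i)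

lemma measurable_addFun : Measurable fun p : ℝ × ℝ => p.1 + p.2 :=
  measurable_fst.add measurable_snd

lemma sconv_Ioi (μ : Measure ℝ) (n : ℕ) (x : ℝ) :
    sconv μ n (Ioi x) = (Measure.pi fun _ : Fin n => μ) {y | x < ∑ i, y i} := by
  rw [sconv, Measure.map_apply (measurable_finSum n) measurableSet_Ioi]
  rfl

lemma convTail_eq (μ : Measure ℝ) (n : ℕ) (x : ℝ) :
    convTail μ n x = (sconv μ n (Ioi x)).toReal := by
  rw [convTail, sconv_Ioi]

instance sconv_prob (μ : Measure ℝ) [IsProbabilityMeasure μ] (n : ℕ) :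
    IsProbabilityMeasure (sconv μ n) :=
  Measure.isProbabilityMeasure_map (measurable_finSum n).aemeasurable

lemma sconv_zero (μ : Measure ℝ) [IsProbabilityMeasure μ] : sconv μ 0 = Measure.dirac 0 := by
  rw [sconv]
  have : (fun y : Fin 0 → ℝ => ∑ i, y i) = fun _ => (0 : ℝ) := by
    funext y; simp
  rw [this, Measure.map_const, measure_univ, one_smul]

lemma sconv_one (μ : Measure ℝ) [IsProbabilityMeasure μ] : sconv μ 1 = μ := by
  rw [sconv]
  have h1 : (fun y : Fin 1 → ℝ => ∑ i, y i) = fun y => y 0 := by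
    funext y; simp
  rw [h1]
  have h := (MeasureTheory.measurePreserving_funUnique (β := ℝ) μ (Fin 1)).map_eq
  have h2 : (fun y : Fin 1 → ℝ => y 0) = ⇑(MeasurableEquiv.funUnique (Fin 1) ℝ) := rfl
  rw [h2]; exact h

lemma prod_tail (ρ σ : Measure ℝ) [SFinite σ] (x : ℝ) :
    (ρ.prod σ) {p : ℝ × ℝ | x < p.1 + p.2} = ∫⁻ a, σ (Ioi (x - a)) ∂ρ := by
  have hms : MeasurableSet {p : ℝ × ℝ | x < p.1 + p.2} :=
    measurableSet_lt measurable_const measurable_addFun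
  rw [Measure.prod_apply hms]
  congr 1
  funext a
  congr 1
  ext b
  simp [sub_lt_iff_lt_add']

lemma mconv_Ioi (ρ σ : Measure ℝ) [SFinite σ] (x : ℝ) :
    mconv ρ σ (Ioi x) = ∫⁻ a, σ (Ioi (x - a)) ∂ρ := by
  rw [mconv, Measure.map_apply measurable_addFun measurableSet_Ioi, ← prod_tail]
  rfl

lemma sconv_add (μ : Measure ℝ) [IsProbabilityMeasure μ] (a b : ℕ) :
    mconv (sconv μ a) (sconv μ b) = sconv μ (a + b) := by
  classical
  set e₁ := MeasurableEquiv.sumPiEquivProdPi (fun _ : Fin a ⊕ Fin b => ℝ) with he₁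
  set e₂ := MeasurableEquiv.piCongrLeft (fun _ : Fin (a + b) => ℝ) finSumFinEquiv with he₂
  have hpi1 : ((Measure.pi fun _ : Fin a => μ).prod (Measure.pi fun _ : Fin b => μ))
      = Measure.map e₁ (Measure.pi fun _ : Fin a ⊕ Fin b => μ) :=
    (measurePreserving_sumPiEquivProdPi (fun _ : Fin a ⊕ Fin b => μ)).map_eq.symm
  have hpi2 : (Measure.pi fun _ : Fin (a + b) => μ)
      = Measure.map e₂ (Measure.pi fun _ : Fin a ⊕ Fin b => μ) :=
    (measurePreserving_piCongrLeft (μ := fun _ : Fin (a+b) => μ) (α := fun _ => ℝ)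
      finSumFinEquiv).map_eq.symm
  rw [mconv, sconv, sconv, sconv,
    Measure.map_prod_map _ _ (measurable_finSum a) (measurable_finSum b),
    Measure.map_map measurable_addFun ((measurable_finSum a).prodMap (measurable_finSum b)),
    hpi1, Measure.map_map
      (measurable_addFun.comp ((measurable_finSum a).prodMap (measurable_finSum b)))
      e₁.measurable,
    hpi2, Measure.map_map (measurable_finSum (a+b)) e₂.measurable]
  congr 1
  funext y
  show (∑ i, (e₁ y).1 i) + (∑ i, (e₁ y).2 i) = ∑ i, e₂ y i
  have h1 : ∀ i : Fin a, (e₁ y).1 i = y (Sum.inl i) := fun i => rfl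
  have h2 : ∀ i : Fin b, (e₁ y).2 i = y (Sum.inr i) := fun i => rfl
  have h3 : ∑ i, e₂ y i = ∑ j : Fin a ⊕ Fin b, y j := by
    refine (Fintype.sum_equiv finSumFinEquiv _ _ fun j => ?_).symm
    rw [he₂]
    exact (Equiv.piCongrLeft_apply_apply (fun _ => ℝ) finSumFinEquiv y j).symm
  simp only [h1, h2, h3, Fintype.sum_sum_type]

lemma pi_coord_nonpos (μ : Measure ℝ) [IsProbabilityMeasure μ] (hsupp : μ (Ioi 0) = 1)
    {n : ℕ} (i : Fin n) : (Measure.pi fun _ : Fin n => μ) {y | y i ≤ 0} = 0 := by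
  have hIic : μ (Iic 0) = 0 := by
    have := measure_compl (s := Ioi 0) measurableSet_Ioi (measure_ne_top μ _)
    rw [hsupp, measure_univ, compl_Ioi] at this
    simpa using this
  have hset : {y : Fin n → ℝ | y i ≤ 0} = Set.pi univ (fun j => if j = i then Iic 0 else univ) := by
    ext y
    simp only [mem_setOf_eq, Set.mem_pi, mem_univ, true_implies]
    constructor
    · intro h j
      by_cases hj : j = i <;> simp [hj, h]
    · intro h
      have := h i
      simpa using this
  rw [hset, Measure.pi_pi]
  exact Finset.prod_eq_zero (Finset.mem_univ i) (by simp [hIic])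

lemma sconv_tail_neg (μ : Measure ℝ) [IsProbabilityMeasure μ] (hsupp : μ (Ioi 0) = 1)
    {n : ℕ} {t : ℝ} (ht : t < 0) : sconv μ n (Ioi t) = 1 := by
  rw [sconv, Measure.map_apply (measurable_finSum n) measurableSet_Ioi]
  have hms : MeasurableSet ((fun y : Fin n → ℝ => ∑ i, y i) ⁻¹' Ioi t) :=
    (measurable_finSum n) measurableSet_Ioi
  rw [prob_compl_eq_zero_iff hms |>.symm] at *
  · refine measure_mono_null ?_ (measure_iUnion_null (s := fun i : Fin n => {y | y i ≤ 0})
      (fun i => pi_coord_nonpos μ hsupp i))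
    intro y hy
    simp only [mem_compl_iff, mem_preimage, mem_Ioi, not_lt] at hy
    by_contra hc
    simp only [mem_iUnion, mem_setOf_eq, not_exists, not_le] at hc
    have : (0:ℝ) ≤ ∑ i, y i := Finset.sum_nonneg fun i _ => (hc i).le
    linarith

section Comparison
variable {ν ρ : Measure ℝ} [IsProbabilityMeasure ν] [IsProbabilityMeasure ρ]

lemma meas_Ici_le (h : ∀ t, ν (Ioi t) ≤ ρ (Ioi t)) (c : ℝ) : ν (Ici c) ≤ ρ (Ici c) := by
  have hseq : Ici c = ⋂ n : ℕ, Ioi (c - 1 / (n + 1)) := by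
    ext x
    simp only [mem_Ici, mem_iInter, mem_Ioi]
    constructor
    · intro hx n
      have : (0:ℝ) < 1 / (n + 1) := by positivity
      linarith
    · intro hx
      by_contra hc
      push_neg at hc
      obtain ⟨n, hn⟩ := exists_nat_one_div_lt (show (0:ℝ) < c - x by linarith)
      have := hx n
      linarith
  have hanti : Antitone fun n : ℕ => Ioi (c - 1 / (n + 1) : ℝ) := by
    intro a b hab
    apply Ioi_subset_Ioi
    have : (1:ℝ) / (b + 1) ≤ 1 / (a + 1) := by
      apply one_div_le_one_div_of_le (by positivity)
      have : (a:ℝ) ≤ b := Nat.cast_le.mpr hab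
      linarith
    linarith
  have hν := tendsto_measure_iInter_atTop
      (μ := ν) (s := fun n : ℕ => Ioi (c - 1 / (n + 1)))
      (fun n => measurableSet_Ioi.nullMeasurableSet) hanti ⟨0, measure_ne_top _ _⟩
  have hρ := tendsto_measure_iInter_atTop
      (μ := ρ) (s := fun n : ℕ => Ioi (c - 1 / (n + 1)))
      (fun n => measurableSet_Ioi.nullMeasurableSet) hanti ⟨0, measure_ne_top _ _⟩
  rw [hseq]
  exact le_of_tendsto_of_tendsto' hν hρ fun n => h _

lemma meas_upperSet_le (h : ∀ t, ν (Ioi t) ≤ ρ (Ioi t)) {U : Set ℝ} (hU : IsUpperSet U) :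
    ν U ≤ ρ U := by
  rcases U.eq_empty_or_nonempty with rfl | hne
  · simp
  by_cases hbd : BddBelow U
  · set c := sInf U with hc
    have hsub1 : Ioi c ⊆ U := fun b hb => by
      obtain ⟨a, ha, hab⟩ := Real.lt_sInf_add_pos hne (sub_pos.mpr hb)
      exact hU (by linarith : a ≤ b) ha
    by_cases hcU : c ∈ U
    · have hU2 : U = Ici c := by
        apply Subset.antisymm (fun a ha => csInf_le hbd ha)
        intro b hb
        rcases eq_or_lt_of_le (mem_Ici.mp hb) with rfl | hlt
        · exact hcU
        · exact hsub1 hlt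
      rw [hU2]; exact meas_Ici_le h c
    · have hU2 : U = Ioi c := by
        apply Subset.antisymm
        · intro a ha
          rcases eq_or_lt_of_le (csInf_le hbd ha) with rfl | hlt
          · exact absurd ha hcU
          · exact hlt
        · exact hsub1
      rw [hU2]; exact h c
  · have : U = univ := by
      ext b
      simp only [mem_univ, iff_true]
      obtain ⟨a, ha, hab⟩ : ∃ a ∈ U, a < b := by
        rcases not_bddBelow_iff.mp hbd b with ⟨a, ha, hab⟩
        exact ⟨a, ha, hab⟩
      exact hU hab.le ha
    rw [this]
    simp [measure_univ]

lemma lintegral_tail_mono (h : ∀ t, ν (Ioi t) ≤ ρ (Ioi t)) (σ : Measure ℝ)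
    [IsProbabilityMeasure σ] (x : ℝ) :
    ∫⁻ a, σ (Ioi (x - a)) ∂ν ≤ ∫⁻ a, σ (Ioi (x - a)) ∂ρ := by
  set f : ℝ → ℝ := fun a => (σ (Ioi (x - a))).toReal with hf
  have hmono : Monotone f := fun a b hab => ENNReal.toReal_mono (measure_ne_top _ _)
    (measure_mono (Ioi_subset_Ioi (by linarith)))
  have hof : ∀ a, ENNReal.ofReal (f a) = σ (Ioi (x - a)) := fun a =>
    ENNReal.ofReal_toReal (measure_ne_top _ _)
  have hupper : ∀ t : ℝ, IsUpperSet {a : ℝ | t < f a} :=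
    fun t a b hab ha => lt_of_lt_of_le ha (hmono hab)
  calc ∫⁻ a, σ (Ioi (x - a)) ∂ν = ∫⁻ a, ENNReal.ofReal (f a) ∂ν := by simp_rw [hof]
    _ = ∫⁻ t in Ioi (0:ℝ), ν {a | t < f a} := lintegral_eq_lintegral_meas_lt ν
        (ae_of_all _ fun a => ENNReal.toReal_nonneg) hmono.measurable.aemeasurable
    _ ≤ ∫⁻ t in Ioi (0:ℝ), ρ {a | t < f a} :=
        lintegral_mono fun t => meas_upperSet_le h (hupper t)
    _ = ∫⁻ a, ENNReal.ofReal (f a) ∂ρ := (lintegral_eq_lintegral_meas_lt ρ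
        (ae_of_all _ fun a => ENNReal.toReal_nonneg) hmono.measurable.aemeasurable).symm
    _ = ∫⁻ a, σ (Ioi (x - a)) ∂ρ := by simp_rw [hof]

end Comparison

lemma sum_tail_le (μ : Measure ℝ) [IsProbabilityMeasure μ] {Ω : Type} [MeasurableSpace Ω]
    (P : Measure Ω) [IsProbabilityMeasure P] {m : ℕ} (X : Fin m → Ω → ℝ)
    (hX : ∀ j, Measurable (X j)) (hind : iIndepFun X P)
    (h : Fin m → ℕ)
    (hdom : ∀ j t, Measure.map (X j) P (Ioi t) ≤ sconv μ (h j) (Ioi t))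
    (s : Finset (Fin m)) (x : ℝ) :
    P {ω | x < ∑ j ∈ s, X j ω} ≤ sconv μ (∑ j ∈ s, h j) (Ioi x) := by
  classical
  induction s using Finset.induction_on generalizing x with
  | empty =>
    simp only [Finset.sum_empty]
    rcases lt_or_ge x 0 with hx | hx
    · have h1 : sconv μ 0 (Ioi x) = 1 := by
        rw [sconv_zero, Measure.dirac_apply' _ measurableSet_Ioi]
        simp [mem_Ioi, hx]
      rw [h1]
      exact prob_le_one
    · have h0 : {ω : Ω | x < 0} = ∅ := by
        ext ω; simp; linarith
      rw [h0]
      simp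
  | @insert i s hi ih =>
    have hgmeas : Measurable (fun ω => ∑ j ∈ s, X j ω) :=
      Finset.measurable_sum s (fun j _ => hX j)
    haveI : IsProbabilityMeasure (Measure.map (X i) P) :=
      Measure.isProbabilityMeasure_map (hX i).aemeasurable
    haveI : IsProbabilityMeasure (Measure.map (fun ω => ∑ j ∈ s, X j ω) P) :=
      Measure.isProbabilityMeasure_map hgmeas.aemeasurable
    have hindep : IndepFun (X i) (fun ω => ∑ j ∈ s, X j ω) P := by
      have h1 := (hind.indepFun_finsetSum_of_notMem hX hi).symm
      have h2 : (∑ j ∈ s, X j) = fun ω => ∑ j ∈ s, X j ω := by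
        funext ω; exact Finset.sum_apply ω s X
      rwa [h2] at h1
    have hmap : Measure.map (fun ω => (X i ω, ∑ j ∈ s, X j ω)) P
        = (Measure.map (X i) P).prod (Measure.map (fun ω => ∑ j ∈ s, X j ω) P) :=
      (indepFun_iff_map_prod_eq_prod_map_map (hX i).aemeasurable hgmeas.aemeasurable).mp hindep
    have hms : MeasurableSet {p : ℝ × ℝ | x < p.1 + p.2} :=
      measurableSet_lt measurable_const measurable_addFun
    have step1 : P {ω | x < ∑ j ∈ insert i s, X j ω}
        = ((Measure.map (X i) P).prod (Measure.map (fun ω => ∑ j ∈ s, X j ω) P))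
            {p : ℝ × ℝ | x < p.1 + p.2} := by
      rw [← hmap, Measure.map_apply ((hX i).prodMk hgmeas) hms]
      congr 1
      ext ω
      simp [Finset.sum_insert hi]
    rw [step1, prod_tail]
    have step2 : ∫⁻ a, (Measure.map (fun ω => ∑ j ∈ s, X j ω) P) (Ioi (x - a))
          ∂(Measure.map (X i) P)
        ≤ ∫⁻ a, sconv μ (∑ j ∈ s, h j) (Ioi (x - a)) ∂(Measure.map (X i) P) := by
      refine lintegral_mono fun a => ?_
      have : (Measure.map (fun ω => ∑ j ∈ s, X j ω) P) (Ioi (x - a))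
          = P {ω | x - a < ∑ j ∈ s, X j ω} := by
        rw [Measure.map_apply hgmeas measurableSet_Ioi]
        rfl
      rw [this]
      exact ih _
    calc ∫⁻ a, (Measure.map (fun ω => ∑ j ∈ s, X j ω) P) (Ioi (x - a)) ∂(Measure.map (X i) P)
        ≤ ∫⁻ a, sconv μ (∑ j ∈ s, h j) (Ioi (x - a)) ∂(Measure.map (X i) P) := step2
      _ ≤ ∫⁻ a, sconv μ (∑ j ∈ s, h j) (Ioi (x - a)) ∂(sconv μ (h i)) :=
          lintegral_tail_mono (hdom i) _ x
      _ = mconv (sconv μ (h i)) (sconv μ (∑ j ∈ s, h j)) (Ioi x) := (mconv_Ioi _ _ x).symm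
      _ = sconv μ (h i + ∑ j ∈ s, h j) (Ioi x) := by rw [sconv_add]
      _ = sconv μ (∑ j ∈ insert i s, h j) (Ioi x) := by rw [Finset.sum_insert hi]


lemma sconv_succ_tail (μ : Measure ℝ) [IsProbabilityMeasure μ] (hsupp : μ (Ioi 0) = 1)
    (n : ℕ) (x : ℝ) :
    sconv μ (1 + n) (Ioi x) = μ (Ioi x) + ∫⁻ y in Iic x, sconv μ n (Ioi (x - y)) ∂μ := by
  rw [← sconv_add, mconv_Ioi, sconv_one,
    ← lintegral_add_compl (fun y => sconv μ n (Ioi (x - y))) (measurableSet_Iic (a := x)),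
    compl_Iic]
  have h1 : ∫⁻ y in Ioi x, sconv μ n (Ioi (x - y)) ∂μ = μ (Ioi x) := by
    rw [setLIntegral_congr_fun measurableSet_Ioi
      (fun y (hy : y ∈ Ioi x) => sconv_tail_neg μ hsupp (by simp at hy; linarith))]
    simp
  rw [h1, add_comm]

noncomputable def kseq (δ c : ℝ) : ℕ → ℝ
  | 0 => 1
  | n+1 => (1+δ) * kseq δ c n + c

lemma kseq_succ (δ c : ℝ) (n : ℕ) : kseq δ c (n+1) = (1+δ) * kseq δ c n + c := rfl

lemma kseq_ge_one {δ c : ℝ} (hδ : 0 < δ) (hc : 1 ≤ c) : ∀ n, 1 ≤ kseq δ c n := by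
  intro n
  induction n with
  | zero => simp [kseq]
  | succ n ih =>
    have : (0:ℝ) ≤ (1+δ) * kseq δ c n := by nlinarith
    rw [kseq_succ]; nlinarith

lemma kseq_le {δ c : ℝ} (hδ : 0 < δ) :
    ∀ n, kseq δ c n ≤ (1 + c/δ) * (1+δ)^n - c/δ := by
  intro n
  induction n with
  | zero => simp [kseq]
  | succ n ih =>
    have h1 : (0:ℝ) < 1 + δ := by linarith
    rw [kseq_succ, pow_succ]
    have : (1+δ) * kseq δ c n ≤ (1+δ) * ((1 + c/δ) * (1+δ)^n - c/δ) := by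
      exact mul_le_mul_of_nonneg_left ih (le_of_lt h1)
    have hcd : (1+δ) * (c/δ) = c/δ + c := by field_simp
    nlinarith [this]

lemma tailP_anti (μ : Measure ℝ) [IsProbabilityMeasure μ] : Antitone (tailP μ) :=
  fun u v huv => ENNReal.toReal_mono (measure_ne_top _ _) (measure_mono (Ioi_subset_Ioi huv))

lemma tailP_le_one (μ : Measure ℝ) [IsProbabilityMeasure μ] (x : ℝ) : tailP μ x ≤ 1 := by
  rw [tailP]
  exact ENNReal.toReal_le_of_le_ofReal one_pos.le (by simpa using prob_le_one)

lemma kesten (μ : Measure ℝ) (hμ : Subexponential μ) {δ : ℝ} (hδ : 0 < δ) :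
    ∃ C : ℝ, 1 ≤ C ∧ ∀ n : ℕ, ∀ x : ℝ, 0 ≤ x →
      convTail μ n x ≤ C * (1+δ)^n * tailP μ x := by
  obtain ⟨hprob, hsupp, hpos, htend⟩ := hμ
  haveI := hprob
  -- choose T
  have h2 := htend 2 le_rfl
  have hev : ∀ᶠ x : ℝ in atTop, convTail μ 2 x / tailP μ x < 2 + δ := by
    have : (2:ℝ) < 2 + δ := by linarith
    exact h2.eventually (Filter.Tendsto.eventually_lt_const this tendsto_id) |>.mono (fun x hx => hx)
  obtain ⟨T₀, hT₀⟩ := eventually_atTop.mp hev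
  set T : ℝ := max T₀ 0 with hT
  have hTnonneg : 0 ≤ T := le_max_right _ _
  have hTbound : ∀ x, T ≤ x → convTail μ 2 x - tailP μ x ≤ (1+δ) * tailP μ x := by
    intro x hx
    have h1 := hT₀ x (le_trans (le_max_left _ _) hx)
    have h2 := hpos x
    rw [div_lt_iff₀ h2] at h1
    linarith
  set c : ℝ := (tailP μ T)⁻¹ with hc
  have hcpos : 0 < c := inv_pos.mpr (hpos T)
  have hc1 : 1 ≤ c := by
    rw [hc]
    exact one_le_inv_iff₀.mpr ⟨hpos T, tailP_le_one μ T⟩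
  -- main induction
  have main : ∀ n : ℕ, ∀ x : ℝ, 0 ≤ x → convTail μ n x ≤ kseq δ c n * tailP μ x := by
    intro n
    induction n with
    | zero =>
      intro x hx
      have : convTail μ 0 x = 0 := by
        rw [convTail_eq, sconv_zero, Measure.dirac_apply' _ measurableSet_Ioi]
        simp [mem_Ioi, not_lt.mpr hx]
      rw [this]
      have := hpos x
      have := kseq_ge_one hδ hc1 0
      nlinarith
    | succ n ih =>
      intro x hx
      have hkn0 : (0:ℝ) ≤ kseq δ c n := le_trans one_pos.le (kseq_ge_one hδ hc1 n)
      rcases le_or_gt x T with hxT | hxT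
      · -- small x
        have h1 : convTail μ (n+1) x ≤ 1 := by
          rw [convTail_eq]
          exact ENNReal.toReal_le_of_le_ofReal one_pos.le (by simpa using prob_le_one)
        have h2 : 1 ≤ c * tailP μ x := by
          have := tailP_anti μ hxT
          calc (1:ℝ) = c * tailP μ T := by rw [hc, inv_mul_cancel₀ (hpos T).ne']
            _ ≤ c * tailP μ x := mul_le_mul_of_nonneg_left this hcpos.le
        have h3 : c ≤ kseq δ c (n+1) := by
          rw [kseq_succ]; nlinarith
        have h4 := (hpos x).le
        calc convTail μ (n+1) x ≤ 1 := h1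
          _ ≤ c * tailP μ x := h2
          _ ≤ kseq δ c (n+1) * tailP μ x := mul_le_mul_of_nonneg_right h3 h4
      · -- large x
        have hxT' : T ≤ x := hxT.le
        -- ENNReal identities
        set I : ℝ≥0∞ := ∫⁻ y in Iic x, sconv μ n (Ioi (x - y)) ∂μ with hI
        set J : ℝ≥0∞ := ∫⁻ y in Iic x, μ (Ioi (x - y)) ∂μ with hJ
        have hIid : sconv μ (1 + n) (Ioi x) = μ (Ioi x) + I := sconv_succ_tail μ hsupp n x
        have hJid : sconv μ (1 + 1) (Ioi x) = μ (Ioi x) + J := by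
          have := sconv_succ_tail μ hsupp 1 x
          rw [this, hJ]
          congr 1
          refine lintegral_congr fun y => ?_
          rw [sconv_one]
        have hIne : I ≠ ⊤ := by
          have : I ≤ μ (Iic x) := by
            rw [hI]
            calc ∫⁻ y in Iic x, sconv μ n (Ioi (x - y)) ∂μ
                ≤ ∫⁻ _ in Iic x, 1 ∂μ := setLIntegral_mono measurable_const
                  (fun y _ => prob_le_one)
              _ = μ (Iic x) := by simp
          exact ne_top_of_le_ne_top (measure_ne_top _ _) this
        have hJne : J ≠ ⊤ := by
          have : J ≤ μ (Iic x) := by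
            rw [hJ]
            calc ∫⁻ y in Iic x, μ (Ioi (x - y)) ∂μ
                ≤ ∫⁻ _ in Iic x, 1 ∂μ := setLIntegral_mono measurable_const
                  (fun y _ => prob_le_one)
              _ = μ (Iic x) := by simp
          exact ne_top_of_le_ne_top (measure_ne_top _ _) this
        -- bound I
        have hmonoJ : Monotone fun y : ℝ => μ (Ioi (x - y)) := fun u v huv =>
          measure_mono (Ioi_subset_Ioi (by linarith))
        have hIJ : I ≤ ENNReal.ofReal (kseq δ c n) * J := by
          rw [hI, hJ, ← lintegral_const_mul' _ _ ENNReal.ofReal_ne_top]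
          refine setLIntegral_mono (hmonoJ.measurable.const_mul _) (fun y hy => ?_)
          have hxy : (0:ℝ) ≤ x - y := by
            simp only [mem_Iic] at hy
            linarith
          have := ih (x - y) hxy
          rw [convTail_eq] at this
          have h5 : sconv μ n (Ioi (x - y)) =
              ENNReal.ofReal ((sconv μ n (Ioi (x - y))).toReal) :=
            (ENNReal.ofReal_toReal (measure_ne_top _ _)).symm
          rw [h5]
          calc ENNReal.ofReal ((sconv μ n (Ioi (x - y))).toReal)
              ≤ ENNReal.ofReal (kseq δ c n * tailP μ (x - y)) := ENNReal.ofReal_le_ofReal this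
            _ = ENNReal.ofReal (kseq δ c n) * ENNReal.ofReal (tailP μ (x - y)) :=
                ENNReal.ofReal_mul hkn0
            _ = ENNReal.ofReal (kseq δ c n) * μ (Ioi (x - y)) := by
                rw [tailP, ENNReal.ofReal_toReal (measure_ne_top _ _)]
        -- to real numbers
        have hconv1 : convTail μ (n+1) x = tailP μ x + I.toReal := by
          rw [convTail_eq, show n + 1 = 1 + n from by ring, hIid,
            ENNReal.toReal_add (measure_ne_top _ _) hIne, tailP]
        have hconv2 : convTail μ 2 x = tailP μ x + J.toReal := by
          rw [convTail_eq, show (2:ℕ) = 1 + 1 from rfl, hJid,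
            ENNReal.toReal_add (measure_ne_top _ _) hJne, tailP]
        have hJle : J.toReal ≤ (1+δ) * tailP μ x := by
          have := hTbound x hxT'
          rw [hconv2] at this
          linarith
        have hIle : I.toReal ≤ kseq δ c n * J.toReal := by
          have := ENNReal.toReal_mono
            (by exact ENNReal.mul_ne_top ENNReal.ofReal_ne_top hJne) hIJ
          rwa [ENNReal.toReal_mul, ENNReal.toReal_ofReal hkn0] at this
        have hfin : convTail μ (n+1) x ≤ tailP μ x + kseq δ c n * ((1+δ) * tailP μ x) := by
          rw [hconv1]
          have h6 : kseq δ c n * J.toReal ≤ kseq δ c n * ((1+δ) * tailP μ x) :=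
            mul_le_mul_of_nonneg_left hJle hkn0
          linarith
        have h7 := (hpos x).le
        rw [kseq_succ]
        nlinarith [hfin, h7, hkn0]
  refine ⟨1 + c/δ, le_add_of_nonneg_right (by positivity), fun n x hx => ?_⟩
  calc convTail μ n x ≤ kseq δ c n * tailP μ x := main n x hx
    _ ≤ ((1 + c/δ) * (1+δ)^n - c/δ) * tailP μ x :=
        mul_le_mul_of_nonneg_right (kseq_le hδ n) (hpos x).le
    _ ≤ (1 + c/δ) * (1+δ)^n * tailP μ x := by
        have h8 : (0:ℝ) ≤ c/δ := by positivity
        nlinarith [(hpos x).le]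

end KestenAux

open KestenAux in
/-- a uniform Kesten-type bound for sums of independent nonnegative variables,
`k` of which have the subexponential distribution `F` and the remaining ones are each
stochastically dominated by a sum of `H` i.i.d. copies of `F`: for every `ε > 0` there is
`K_ε < ∞` (depending only on `ε`, `F`, `H`) with
`P[X₁+⋯+Xₘ > x] ≤ K_ε (1+ε)^m (1-F(x))` for all `x ≥ 0` and all `m, k`. -/
theorem kesten_bound_with_dominated_terms
    (μ : Measure ℝ) (hμ : Subexponential μ) (H : ℕ) (hH : 1 ≤ H) :
    ∀ ε : ℝ, 0 < ε → ∃ K : ℝ, 0 < K ∧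
      ∀ (Ω : Type) (_ : MeasurableSpace Ω) (P : Measure Ω),
        IsProbabilityMeasure P →
      ∀ (m k : ℕ) (X : Fin m → Ω → ℝ), k ≤ m →
        (∀ j, Measurable (X j)) →
        (∀ j ω, 0 ≤ X j ω) →
        iIndepFun X P →
        (∀ j : Fin m, (j : ℕ) < k → Measure.map (X j) P = μ) →
        (∀ j : Fin m, k ≤ (j : ℕ) →
          ∀ x : ℝ, (P {ω | x < X j ω}).toReal ≤ convTail μ H x) →
        ∀ x : ℝ, 0 ≤ x →
          (P {ω | x < ∑ j, X j ω}).toReal ≤ K * (1 + ε) ^ m * tailP μ x := by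
  intro ε hε
  haveI hprob := hμ.1
  have hpos := hμ.2.2.1
  -- choose δ with (1+δ)^H = 1+ε
  set δ : ℝ := (1 + ε) ^ ((H:ℝ)⁻¹) - 1 with hδdef
  have h1ε : (1:ℝ) < 1 + ε := by linarith
  have hHpos : (0:ℝ) < (H:ℝ)⁻¹ := by
    have : (0:ℝ) < H := by exact_mod_cast hH
    positivity
  have hδpos : 0 < δ := by
    rw [hδdef, sub_pos]
    exact Real.one_lt_rpow_iff_of_pos (by linarith) |>.mpr (Or.inl ⟨h1ε, hHpos⟩)
  have hδ1 : (1:ℝ) + δ = (1 + ε) ^ ((H:ℝ)⁻¹) := by rw [hδdef]; ring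
  have hpow : ((1:ℝ) + δ) ^ H = 1 + ε := by
    rw [hδ1, ← Real.rpow_natCast ((1 + ε) ^ ((H:ℝ)⁻¹)) H, ← Real.rpow_mul (by linarith)]
    have hHne : (H:ℝ) ≠ 0 := by
      have : (0:ℝ) < H := by exact_mod_cast hH
      linarith
    rw [inv_mul_cancel₀ hHne]
    simp
  obtain ⟨C, hC1, hC⟩ := kesten μ hμ hδpos
  refine ⟨C, lt_of_lt_of_le one_pos hC1, ?_⟩
  intro Ω mΩ P hP m k X hkm hmeas hnonneg hind hlaw hdom x hx
  haveI := hP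
  -- dominating counts
  set h : Fin m → ℕ := fun j => if (j : ℕ) < k then 1 else H with hh
  have hdom' : ∀ (j : Fin m) (t : ℝ),
      Measure.map (X j) P (Ioi t) ≤ sconv μ (h j) (Ioi t) := by
    intro j t
    by_cases hj : (j : ℕ) < k
    · rw [hh]; simp only [hj, if_true]
      rw [hlaw j hj, sconv_one]
    · rw [hh]; simp only [hj, if_false]
      have h2 := hdom j (not_lt.mp hj) t
      rw [convTail_eq] at h2
      have h3 : Measure.map (X j) P (Ioi t) = P {ω | t < X j ω} := by
        rw [Measure.map_apply (hmeas j) measurableSet_Ioi]; rfl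
      rw [h3]
      exact (ENNReal.toReal_le_toReal (measure_ne_top _ _) (measure_ne_top _ _)).mp h2
  have hmain := sum_tail_le μ P X hmeas hind h hdom' Finset.univ x
  set N : ℕ := ∑ j, h j with hN
  have hNle : N ≤ H * m := by
    rw [hN]
    calc ∑ j, h j ≤ ∑ _j : Fin m, H := Finset.sum_le_sum fun j _ => by
          rw [hh]; dsimp only; split
          · exact hH
          · exact le_rfl
      _ = m * H := by simp [Finset.sum_const, mul_comm]
      _ = H * m := mul_comm m H
  -- to reals
  have hR : (P {ω | x < ∑ j, X j ω}).toReal ≤ convTail μ N x := by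
    rw [convTail_eq]
    exact ENNReal.toReal_mono (measure_ne_top _ _) hmain
  have hK := hC N x hx
  have htp := (hpos x).le
  have hpow2 : (1 + δ) ^ N ≤ (1 + ε) ^ m := by
    calc ((1:ℝ) + δ) ^ N ≤ (1 + δ) ^ (H * m) :=
          pow_le_pow_right₀ (by linarith) hNle
      _ = ((1 + δ) ^ H) ^ m := by rw [pow_mul]
      _ = (1 + ε) ^ m := by rw [hpow]
  calc (P {ω | x < ∑ j, X j ω}).toReal ≤ convTail μ N x := hR
    _ ≤ C * (1 + δ) ^ N * tailP μ x := hK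
    _ ≤ C * (1 + ε) ^ m * tailP μ x := by
        have : C * (1 + δ) ^ N ≤ C * (1 + ε) ^ m :=
          mul_le_mul_of_nonneg_left hpow2 (by linarith)
        exact mul_le_mul_of_nonneg_right this htp
end

section
/- In the infinite-capacity G/G/∞ system with renewal arrivals of rate λ and i.i.d. service times with finite mean E[θ], the number N_n^{(∞)} of customers present at the n-th arrival epoch satisfies: the probability generating function E[z^{N_n^{(∞)}}] is finite for every complex z; in particular P[N_n^{(∞)} > ψ/2] → 0 as ψ → ∞, uniformly in n. -/
open MeasureTheory ProbabilityTheory Filter Set Asymptotics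
open scoped Classical

/-- Expectation of a product of independent, `[0,1]`-valued random variables factorizes. -/
lemma aux_integral_prod {Ω ι : Type*} [MeasurableSpace Ω] {μ : Measure Ω}
    [IsProbabilityMeasure μ] {f : ι → Ω → ℝ}
    (hindep : iIndepFun f μ)
    (hmeas : ∀ i, Measurable (f i)) (h0 : ∀ i ω, 0 ≤ f i ω) (h1 : ∀ i ω, f i ω ≤ 1)
    (s : Finset ι) :
    ∫ ω, ∏ j ∈ s, f j ω ∂μ = ∏ j ∈ s, ∫ ω, f j ω ∂μ := by
  classical
  induction s using Finset.induction_on with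
  | empty => simp
  | @insert a s ha ih =>
    have hint : ∀ i : ι, Integrable (f i) μ := fun i =>
      (integrable_const (1 : ℝ)).mono' (hmeas i).aestronglyMeasurable
        (Eventually.of_forall fun ω => by
          rw [Real.norm_eq_abs, abs_of_nonneg (h0 i ω)]; exact h1 i ω)
    have hprodint : Integrable (fun ω => ∏ j ∈ s, f j ω) μ :=
      (integrable_const (1 : ℝ)).mono'
        ((Finset.measurable_prod s fun j _ => hmeas j)).aestronglyMeasurable
        (Eventually.of_forall fun ω => by
          rw [Real.norm_eq_abs, abs_of_nonneg (Finset.prod_nonneg fun j _ => h0 j ω)]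
          exact Finset.prod_le_one (fun j _ => h0 j ω) fun j _ => h1 j ω)
    have hIF : IndepFun (∏ j ∈ s, f j) (f a) μ :=
      hindep.indepFun_finsetProd_of_notMem hmeas (by exact ha)
    have hfe : (∏ j ∈ s, f j) = fun ω => ∏ j ∈ s, f j ω := by
      ext ω; simp [Finset.prod_apply]
    have key : ∫ ω, (∏ j ∈ s, f j ω) * f a ω ∂μ
        = (∫ ω, ∏ j ∈ s, f j ω ∂μ) * ∫ ω, f a ω ∂μ := by
      have h2 := hIF.integral_mul_eq_mul_integral (by rw [hfe]; exact hprodint.aestronglyMeasurable) (hint a).aestronglyMeasurable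
      rw [hfe] at h2
      simpa [Pi.mul_apply] using h2
    simp only [Finset.prod_insert ha]
    rw [← ih]
    calc ∫ ω, f a ω * ∏ j ∈ s, f j ω ∂μ = ∫ ω, (∏ j ∈ s, f j ω) * f a ω ∂μ := by
          simp [mul_comm]
      _ = (∫ ω, ∏ j ∈ s, f j ω ∂μ) * ∫ ω, f a ω ∂μ := key
      _ = (∫ ω, f a ω ∂μ) * ∫ ω, ∏ j ∈ s, f j ω ∂μ := mul_comm _ _


/-- in the infinite-capacity `G/G/∞` system with renewal arrivals `{τₙ}` of
rate `λ ∈ (0,∞)` and i.i.d. service times with finite mean, the number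
`Nₙ^{(∞)} = #{i < n : θᵢ > τₙ − τᵢ}` of customers present at the `n`-th arrival has an
everywhere-finite probability generating function; in particular
`P[Nₙ^{(∞)} > ψ/2] → 0` as `ψ → ∞`, uniformly in `n`. -/
theorem gg_infinity_pgf_finite
    {Ω : Type} [MeasurableSpace Ω] (P : Measure Ω) [IsProbabilityMeasure P]
    (τ θ : ℕ → Ω → ℝ)
    (hτmeas : ∀ n, Measurable (τ n)) (hθmeas : ∀ n, Measurable (θ n))
    (hτpos : ∀ n ω, τ n ω < τ (n + 1) ω)
    (hτident : ∀ n, Measure.map (fun ω => τ (n + 1) ω - τ n ω) P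
        = Measure.map (fun ω => τ 1 ω - τ 0 ω) P)
    (hτint : Integrable (fun ω => τ 1 ω - τ 0 ω) P)
    (hrate : 0 < ∫ ω, (τ 1 ω - τ 0 ω) ∂P)
    (hθnonneg : ∀ n ω, 0 ≤ θ n ω)
    (hθident : ∀ n, Measure.map (θ n) P = Measure.map (θ 0) P)
    (hθint : Integrable (θ 0) P)
    (hindep : iIndepFun
      (fun k => Sum.elim (fun n => fun ω => τ (n + 1) ω - τ n ω) θ k) P)
    -- the number of customers in service at the `n`-th arrival epoch:
    (N : ℕ → Ω → ℕ)
    (hN : ∀ n ω, N n ω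
        = ((Finset.range n).filter fun i => τ n ω - τ i ω < θ i ω).card) :
    (∀ z : ℂ, ∀ n, Integrable (fun ω => z ^ N n ω) P) ∧
    Tendsto (fun ψ : ℝ => ⨆ n : ℕ, (P {ω | ψ / 2 < (N n ω : ℝ)}).toReal)
      atTop (nhds 0) := by
  classical
  -- basic measurability facts
  have hEmeas : ∀ n i, MeasurableSet {ω | τ n ω - τ i ω < θ i ω} := fun n i =>
    measurableSet_lt ((hτmeas n).sub (hτmeas i)) (hθmeas i)
  have hNmeasNat : ∀ n, Measurable (N n) := by
    intro n
    have hfe : N n = fun ω =>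
        ∑ i ∈ Finset.range n, if τ n ω - τ i ω < θ i ω then 1 else 0 := by
      funext ω; rw [hN n ω, Finset.card_filter]
    rw [hfe]
    exact Finset.measurable_sum _ fun i _ =>
      Measurable.ite (hEmeas n i) measurable_const measurable_const
  have hNle : ∀ n ω, N n ω ≤ n := fun n ω => by
    rw [hN]
    exact le_trans (Finset.card_filter_le _ _) (by simp)
  -- Part 1 : integrability of `z ^ N n`
  have part1 : ∀ z : ℂ, ∀ n, Integrable (fun ω => z ^ N n ω) P := by
    intro z n
    refine (integrable_const ((max 1 ‖z‖) ^ n)).mono' ?_ ?_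
    · exact ((measurable_from_top (f := fun k : ℕ => z ^ k)).comp
        (hNmeasNat n)).aestronglyMeasurable
    · refine Eventually.of_forall fun ω => ?_
      have h1 : ‖z ^ N n ω‖ = ‖z‖ ^ N n ω := norm_pow z (N n ω)
      rw [h1]
      calc ‖z‖ ^ N n ω ≤ (max 1 ‖z‖) ^ N n ω :=
            pow_le_pow_left₀ (norm_nonneg z) (le_max_right _ _) _
        _ ≤ (max 1 ‖z‖) ^ n := pow_le_pow_right₀ (le_max_left _ _) (hNle n ω)
  refine ⟨part1, ?_⟩
  -- the interarrival increments
  set X : ℕ → Ω → ℝ := fun j ω => τ (j + 1) ω - τ j ω with hXdef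
  have hXmeas : ∀ j, Measurable (X j) := fun j => (hτmeas (j + 1)).sub (hτmeas j)
  have hXpos : ∀ j ω, 0 < X j ω := fun j ω => sub_pos.mpr (hτpos j ω)
  -- integrability of the exponentials
  have hexpint : ∀ j, Integrable (fun ω => Real.exp (-(X j ω))) P := by
    intro j
    refine (integrable_const (1 : ℝ)).mono'
      ((Real.measurable_exp.comp (hXmeas j).neg).aestronglyMeasurable) ?_
    refine Eventually.of_forall fun ω => ?_
    rw [Real.norm_eq_abs, abs_of_nonneg (Real.exp_pos _).le]
    exact Real.exp_le_one_iff.mpr (neg_nonpos.mpr (hXpos j ω).le)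
  set ρ : ℝ := ∫ ω, Real.exp (-(X 0 ω)) ∂P with hρdef
  have hρ0 : 0 ≤ ρ := integral_nonneg fun ω => (Real.exp_pos _).le
  have hρlt : ρ < 1 := by
    have hsub : (1 : ℝ) - ρ = ∫ ω, (1 - Real.exp (-(X 0 ω))) ∂P := by
      rw [integral_sub (integrable_const 1) (hexpint 0)]; simp; exact hρdef
    have hpos : 0 < ∫ ω, (1 - Real.exp (-(X 0 ω))) ∂P := by
      have hiff := integral_pos_iff_support_of_nonneg
        (f := fun ω => 1 - Real.exp (-(X 0 ω))) (μ := P)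
        (fun ω => by
          have h1 := Real.exp_lt_one_iff.mpr (neg_neg_of_pos (hXpos 0 ω))
          simp only [Pi.zero_apply]
          linarith)
        ((integrable_const 1).sub (hexpint 0))
      rw [hiff]
      have hsupp : (Function.support fun ω => 1 - Real.exp (-(X 0 ω))) = Set.univ := by
        ext ω
        have := Real.exp_lt_one_iff.mpr (neg_neg_of_pos (hXpos 0 ω))
        simp only [Function.mem_support, Set.mem_univ, iff_true]
        intro h; linarith
      rw [hsupp]
      simp
    linarith
  -- choice of the Chernoff parameter
  obtain ⟨ε, hε1, hεpos⟩ : ∃ ε : ℝ, Real.exp ε * ρ < 1 ∧ 0 < ε := by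
    have hc : Tendsto (fun t : ℝ => Real.exp t * ρ) (nhds 0) (nhds ρ) := by
      have := ((Real.continuous_exp.tendsto 0).mul_const ρ)
      simpa using this
    have hev : ∀ᶠ t in nhds (0 : ℝ), Real.exp t * ρ < 1 := hc.eventually (gt_mem_nhds hρlt)
    have := (hev.filter_mono nhdsWithin_le_nhds).and
      (self_mem_nhdsWithin (s := Set.Ioi (0 : ℝ)) (a := (0 : ℝ)))
    exact this.exists
  set r : ℝ := Real.exp ε * ρ with hrdef
  have hr0 : 0 ≤ r := mul_nonneg (Real.exp_pos _).le hρ0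
  have hr1 : r < 1 := hε1
  -- independence of the exponential family
  have hfmeas : ∀ k : ℕ ⊕ ℕ, Measurable (fun ω => Real.exp (-(Sum.elim X θ k ω))) := by
    intro k
    refine Real.measurable_exp.comp (Measurable.neg ?_)
    cases k with
    | inl j => exact hXmeas j
    | inr j => exact hθmeas j
  have h0el : ∀ (k : ℕ ⊕ ℕ) (ω : Ω), 0 ≤ Sum.elim X θ k ω := by
    intro k ω
    cases k with
    | inl j => exact (hXpos j ω).le
    | inr j => exact hθnonneg j ω
  have hfindep : iIndepFun
      (fun k => fun ω => Real.exp (-(Sum.elim X θ k ω))) P := by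
    have := hindep.comp (fun _ => fun x : ℝ => Real.exp (-x))
      (fun _ => Real.measurable_exp.comp measurable_neg)
    exact this
  have hprod_eq : ∀ s : Finset (ℕ ⊕ ℕ),
      ∫ ω, ∏ k ∈ s, Real.exp (-(Sum.elim X θ k ω)) ∂P
        = ∏ k ∈ s, ∫ ω, Real.exp (-(Sum.elim X θ k ω)) ∂P :=
    aux_integral_prod hfindep hfmeas
      (fun k ω => (Real.exp_pos _).le)
      (fun k ω => Real.exp_le_one_iff.mpr (neg_nonpos.mpr (h0el k ω))) 
  -- identical distribution of the exponentials
  have hexpρ : ∀ j : ℕ, ∫ ω, Real.exp (-(X j ω)) ∂P = ρ := by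
    intro j
    have hmf : Measurable fun x : ℝ => Real.exp (-x) :=
      Real.measurable_exp.comp measurable_neg
    have h1 : ∫ ω, Real.exp (-(X j ω)) ∂P
        = ∫ x, Real.exp (-x) ∂(Measure.map (X j) P) :=
      (integral_map (f := fun x : ℝ => Real.exp (-x)) (hXmeas j).aemeasurable
        hmf.aestronglyMeasurable).symm
    have h2 : Measure.map (X j) P = Measure.map (X 0) P := hτident j
    rw [h1, h2,
      integral_map (f := fun x : ℝ => Real.exp (-x)) (hXmeas 0).aemeasurable
        hmf.aestronglyMeasurable]
  -- the Chernoff bound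
  have hchern : ∀ i n : ℕ, i < n →
      (P {ω | τ n ω - τ i ω < ε * ((n - i : ℕ) : ℝ)}).toReal ≤ r ^ (n - i) := by
    intro i n hin
    set A := {ω | τ n ω - τ i ω < ε * ((n - i : ℕ) : ℝ)} with hAdef
    have hAmeas : MeasurableSet A :=
      measurableSet_lt ((hτmeas n).sub (hτmeas i)) measurable_const
    set s : Finset (ℕ ⊕ ℕ) := (Finset.Ico i n).map ⟨Sum.inl, Sum.inl_injective⟩ with hsdef
    have hsum : ∀ ω, ∑ j ∈ Finset.Ico i n, X j ω = τ n ω - τ i ω := by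
      intro ω
      rw [Finset.sum_Ico_eq_sub _ hin.le]
      simp only [hXdef]
      rw [Finset.sum_range_sub (fun j => τ j ω), Finset.sum_range_sub (fun j => τ j ω)]
      ring
    have hprodω : ∀ ω, ∏ k ∈ s, Real.exp (-(Sum.elim X θ k ω))
        = Real.exp (-(τ n ω - τ i ω)) := by
      intro ω
      simp only [hsdef, Finset.prod_map, Function.Embedding.coeFn_mk, Sum.elim_inl]
      rw [← Real.exp_sum, Finset.sum_neg_distrib, hsum ω]
    have hpoint : ∀ ω, Set.indicator A (fun _ => (1 : ℝ)) ω
        ≤ Real.exp (ε * ((n - i : ℕ) : ℝ)) * ∏ k ∈ s, Real.exp (-(Sum.elim X θ k ω)) := by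
      intro ω
      rw [hprodω ω, ← Real.exp_add]
      by_cases hω : ω ∈ A
      · rw [Set.indicator_of_mem hω]
        refine Real.one_le_exp ?_
        have : τ n ω - τ i ω < ε * ((n - i : ℕ) : ℝ) := hω
        linarith
      · rw [Set.indicator_of_notMem hω]
        exact (Real.exp_pos _).le
    have hintind : Integrable (Set.indicator A fun _ => (1 : ℝ)) P :=
      (integrable_const (1 : ℝ)).indicator hAmeas
    have hintprod : Integrable
        (fun ω => Real.exp (ε * ((n - i : ℕ) : ℝ))
          * ∏ k ∈ s, Real.exp (-(Sum.elim X θ k ω))) P := by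
      refine Integrable.const_mul ?_ _
      refine (integrable_const (1 : ℝ)).mono'
        ((Finset.measurable_prod s fun k _ => hfmeas k)).aestronglyMeasurable ?_
      refine Eventually.of_forall fun ω => ?_
      rw [Real.norm_eq_abs,
        abs_of_nonneg (Finset.prod_nonneg fun k _ => (Real.exp_pos _).le)]
      exact Finset.prod_le_one (fun k _ => (Real.exp_pos _).le)
        (fun k _ => Real.exp_le_one_iff.mpr (neg_nonpos.mpr (h0el k ω)))
    have h1 : (P A).toReal ≤ Real.exp (ε * ((n - i : ℕ) : ℝ))
        * ∏ k ∈ s, ∫ ω, Real.exp (-(Sum.elim X θ k ω)) ∂P := by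
      have h2 : (P A).toReal = ∫ ω, Set.indicator A (fun _ => (1 : ℝ)) ω ∂P := by
        rw [integral_indicator_const (1 : ℝ) hAmeas]; simp [measureReal_def]
      rw [h2, ← hprod_eq s, ← integral_const_mul]
      exact integral_mono hintind hintprod hpoint
    have h3 : ∏ k ∈ s, ∫ ω, Real.exp (-(Sum.elim X θ k ω)) ∂P = ρ ^ (n - i) := by
      simp only [hsdef, Finset.prod_map, Function.Embedding.coeFn_mk, Sum.elim_inl]
      have h4 : ∀ j ∈ Finset.Ico i n,
          (∫ ω, Real.exp (-(X j ω)) ∂P) = ρ := fun j _ => hexpρ j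
      rw [Finset.prod_congr rfl h4, Finset.prod_const, Nat.card_Ico]
    rw [h3] at h1
    refine le_trans h1 ?_
    rw [hrdef, mul_pow, ← Real.exp_nat_mul]
    apply le_of_eq
    congr 1
    · congr 1
      ring
  -- identical distribution of the service-time tails
  have hbθ : ∀ (c : ℝ) (i : ℕ), P {ω | c < θ i ω} = P {ω | c < θ 0 ω} := by
    intro c i
    have h1 : P {ω | c < θ i ω} = (Measure.map (θ i) P) (Set.Ioi c) := by
      rw [Measure.map_apply (hθmeas i) measurableSet_Ioi]
      rfl
    rw [h1, hθident i, Measure.map_apply (hθmeas 0) measurableSet_Ioi]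
    rfl
  have hθEmeas : ∀ c : ℝ, MeasurableSet {ω | c < θ 0 ω} :=
    fun c => measurableSet_lt measurable_const (hθmeas 0)
  set C : ℝ := (∫ ω, θ 0 ω ∂P) / ε + (1 - r)⁻¹ with hCdef
  have hNint : ∀ n, Integrable (fun ω => (N n ω : ℝ)) P := by
    intro n
    refine (integrable_const ((n : ℕ) : ℝ)).mono'
      ((measurable_from_top (f := fun k : ℕ => (k : ℝ))).comp
        (hNmeasNat n)).aestronglyMeasurable ?_
    refine Eventually.of_forall fun ω => ?_
    rw [Real.norm_eq_abs, abs_of_nonneg (Nat.cast_nonneg _)]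
    exact_mod_cast hNle n ω
  -- the uniform expectation bound
  have hEN : ∀ n, ∫ ω, (N n ω : ℝ) ∂P ≤ C := by
    intro n
    have hrep : ∫ ω, (N n ω : ℝ) ∂P
        = ∑ i ∈ Finset.range n, (P {ω | τ n ω - τ i ω < θ i ω}).toReal := by
      have hfe : (fun ω => (N n ω : ℝ)) = fun ω => ∑ i ∈ Finset.range n,
          Set.indicator {ω' | τ n ω' - τ i ω' < θ i ω'} (fun _ => (1 : ℝ)) ω := by
        funext ω
        rw [hN n ω, Finset.card_filter]
        push_cast
        refine Finset.sum_congr rfl fun i _ => ?_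
        by_cases h : τ n ω - τ i ω < θ i ω <;> simp [Set.indicator_apply, h]
      rw [hfe, integral_finset_sum _
        (fun i _ => (integrable_const (1 : ℝ)).indicator (hEmeas n i))]
      refine Finset.sum_congr rfl fun i _ => ?_
      rw [integral_indicator_const (1 : ℝ) (hEmeas n i)]
      simp [measureReal_def]
    rw [hrep]
    have hterm : ∀ i ∈ Finset.range n, (P {ω | τ n ω - τ i ω < θ i ω}).toReal
        ≤ (P {ω | ε * ((n - i : ℕ) : ℝ) < θ 0 ω}).toReal + r ^ (n - i) := by
      intro i hi
      have hin : i < n := Finset.mem_range.mp hi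
      have hsub : {ω | τ n ω - τ i ω < θ i ω}
          ⊆ {ω | ε * ((n - i : ℕ) : ℝ) < θ i ω}
            ∪ {ω | τ n ω - τ i ω < ε * ((n - i : ℕ) : ℝ)} := by
        intro ω hω
        by_cases h : ε * ((n - i : ℕ) : ℝ) < θ i ω
        · exact Or.inl h
        · exact Or.inr (lt_of_lt_of_le hω (not_lt.mp h))
      have h1 : P {ω | τ n ω - τ i ω < θ i ω}
          ≤ P {ω | ε * ((n - i : ℕ) : ℝ) < θ i ω}
            + P {ω | τ n ω - τ i ω < ε * ((n - i : ℕ) : ℝ)} :=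
        le_trans (measure_mono hsub) (measure_union_le _ _)
      have h2 : (P {ω | τ n ω - τ i ω < θ i ω}).toReal
          ≤ (P {ω | ε * ((n - i : ℕ) : ℝ) < θ i ω}).toReal
            + (P {ω | τ n ω - τ i ω < ε * ((n - i : ℕ) : ℝ)}).toReal := by
        rw [← ENNReal.toReal_add (measure_ne_top P _) (measure_ne_top P _)]
        exact ENNReal.toReal_mono
          (ENNReal.add_ne_top.mpr ⟨measure_ne_top P _, measure_ne_top P _⟩) h1
      refine le_trans h2 ?_
      rw [hbθ _ i]
      exact add_le_add le_rfl (hchern i n hin)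
    refine le_trans (Finset.sum_le_sum hterm) ?_
    rw [Finset.sum_add_distrib]
    have hsum2 : ∑ i ∈ Finset.range n, r ^ (n - i) ≤ (1 - r)⁻¹ := by
      have he : ∑ i ∈ Finset.range n, r ^ (n - i)
          = ∑ j ∈ Finset.range n, r ^ (j + 1) := by
        rw [← Finset.sum_range_reflect (fun j => r ^ (j + 1)) n]
        refine Finset.sum_congr rfl fun i hi => ?_
        have hi' := Finset.mem_range.mp hi
        have : n - 1 - i + 1 = n - i := by omega
        rw [this]
      rw [he]
      refine le_trans (Finset.sum_le_sum fun j _ => ?_)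
        (sum_le_hasSum (Finset.range n) (fun j _ => pow_nonneg hr0 j)
          (hasSum_geometric_of_lt_one hr0 hr1))
      rw [pow_succ]
      exact mul_le_of_le_one_right (pow_nonneg hr0 j) hr1.le
    have hsum1 : ∑ i ∈ Finset.range n, (P {ω | ε * ((n - i : ℕ) : ℝ) < θ 0 ω}).toReal
        ≤ (∫ ω, θ 0 ω ∂P) / ε := by
      have he : ∑ i ∈ Finset.range n, (P {ω | ε * ((n - i : ℕ) : ℝ) < θ 0 ω}).toReal
          = ∑ j ∈ Finset.range n, (P {ω | ε * ((j + 1 : ℕ) : ℝ) < θ 0 ω}).toReal := by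
        rw [← Finset.sum_range_reflect
          (fun j => (P {ω | ε * ((j + 1 : ℕ) : ℝ) < θ 0 ω}).toReal) n]
        refine Finset.sum_congr rfl fun i hi => ?_
        have : n - 1 - i + 1 = n - i := by
          have := Finset.mem_range.mp hi; omega
        rw [this]
      rw [he]
      have hrep2 : ∑ j ∈ Finset.range n, (P {ω | ε * ((j + 1 : ℕ) : ℝ) < θ 0 ω}).toReal
          = ∫ ω, (∑ j ∈ Finset.range n,
              Set.indicator {ω' | ε * ((j + 1 : ℕ) : ℝ) < θ 0 ω'}
                (fun _ => (1 : ℝ)) ω) ∂P := by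
        rw [integral_finset_sum _
          (fun j _ => (integrable_const (1 : ℝ)).indicator (hθEmeas _))]
        refine Finset.sum_congr rfl fun j _ => ?_
        rw [integral_indicator_const (1 : ℝ) (hθEmeas _)]
        simp [measureReal_def]
      rw [hrep2]
      have hbound : ∀ ω, (∑ j ∈ Finset.range n,
          Set.indicator {ω' | ε * ((j + 1 : ℕ) : ℝ) < θ 0 ω'}
            (fun _ => (1 : ℝ)) ω) ≤ θ 0 ω / ε := by
        intro ω
        have hcount : (∑ j ∈ Finset.range n,
            Set.indicator {ω' | ε * ((j + 1 : ℕ) : ℝ) < θ 0 ω'} (fun _ => (1 : ℝ)) ω)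
            = (((Finset.range n).filter
                (fun j => ε * ((j + 1 : ℕ) : ℝ) < θ 0 ω)).card : ℝ) := by
          rw [Finset.card_filter]
          push_cast
          refine Finset.sum_congr rfl fun j _ => ?_
          by_cases h : ε * ((j + 1 : ℕ) : ℝ) < θ 0 ω <;> simp [Set.indicator_apply, h]
        rw [hcount]
        set t := (Finset.range n).filter (fun j => ε * ((j + 1 : ℕ) : ℝ) < θ 0 ω) with htdef
        rcases t.eq_empty_or_nonempty with h | h
        · rw [h]
          simp only [Finset.card_empty, Nat.cast_zero]
          exact div_nonneg (hθnonneg 0 ω) hεpos.le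
        · have hm := t.max'_mem h
          have hmlt : ε * ((t.max' h + 1 : ℕ) : ℝ) < θ 0 ω :=
            (Finset.mem_filter.mp hm).2
          have hcardle : t.card ≤ t.max' h + 1 := by
            have hsub2 : t ⊆ Finset.range (t.max' h + 1) := by
              intro j hj
              exact Finset.mem_range.mpr (Nat.lt_succ_of_le (t.le_max' j hj))
            simpa using Finset.card_le_card hsub2
          have h5 : ((t.max' h + 1 : ℕ) : ℝ) ≤ θ 0 ω / ε :=
            (le_div_iff₀' hεpos).mpr hmlt.le
          refine le_trans ?_ h5
          exact_mod_cast hcardle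
      have hintsum : Integrable (fun ω => ∑ j ∈ Finset.range n,
          Set.indicator {ω' | ε * ((j + 1 : ℕ) : ℝ) < θ 0 ω'}
            (fun _ => (1 : ℝ)) ω) P :=
        integrable_finset_sum _
          (fun j _ => (integrable_const (1 : ℝ)).indicator (hθEmeas _))
      calc ∫ ω, (∑ j ∈ Finset.range n,
            Set.indicator {ω' | ε * ((j + 1 : ℕ) : ℝ) < θ 0 ω'}
              (fun _ => (1 : ℝ)) ω) ∂P
          ≤ ∫ ω, θ 0 ω / ε ∂P :=
            integral_mono hintsum (hθint.div_const ε) hbound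
        _ = (∫ ω, θ 0 ω ∂P) / ε := integral_div ε _
    rw [hCdef]
    exact add_le_add hsum1 hsum2
  -- Markov's inequality gives a uniform tail bound
  have hmar : ∀ (n : ℕ) (ψ : ℝ), 0 < ψ →
      (P {ω | ψ / 2 < (N n ω : ℝ)}).toReal ≤ C / (ψ / 2) := by
    intro n ψ hψ
    have h2 : 0 < ψ / 2 := by linarith
    have hm := mul_meas_ge_le_integral_of_nonneg (μ := P) (f := fun ω => (N n ω : ℝ))
      (Eventually.of_forall fun ω => Nat.cast_nonneg _) (hNint n) (ψ / 2)
    have hmono : (P {ω | ψ / 2 < (N n ω : ℝ)}).toReal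
        ≤ (P {ω | ψ / 2 ≤ (N n ω : ℝ)}).toReal :=
      ENNReal.toReal_mono (measure_ne_top P _)
        (measure_mono fun ω (h : ψ / 2 < (N n ω : ℝ)) => le_of_lt h)
    have hCb : ψ / 2 * (P {ω | ψ / 2 ≤ (N n ω : ℝ)}).toReal ≤ C :=
      le_trans hm (hEN n)
    rw [le_div_iff₀ h2]
    nlinarith [ENNReal.toReal_nonneg (a := P {ω | ψ / 2 < (N n ω : ℝ)})]
  -- conclude by squeezing
  have hupper : Tendsto (fun ψ : ℝ => C / (ψ / 2)) atTop (nhds 0) :=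
    Tendsto.div_atTop tendsto_const_nhds
      (Tendsto.atTop_div_const two_pos tendsto_id)
  refine tendsto_of_tendsto_of_tendsto_of_le_of_le'
    (tendsto_const_nhds : Tendsto (fun _ : ℝ => (0 : ℝ)) atTop (nhds 0)) hupper ?_ ?_
  · exact Eventually.of_forall fun ψ =>
      Real.iSup_nonneg fun n => ENNReal.toReal_nonneg
  · filter_upwards [eventually_gt_atTop (0 : ℝ)] with ψ hψ
    exact ciSup_le fun n => hmar n ψ hψ
end
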